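/- arXiv:0911.4003 — 5 statements merged into one kernel-verified Lean document; each statement's English description precedes it below -/
import Mathlib

section
/- In a finite network, there exist a flow f and an s–t cut F such that f saturates every edge of F and f is zero on every edge of the reverse cut (i.e., f and F are orthogonal). -/
open scoped ENNReal NNReal Classical

/-- A network: a loopless digraph with edge set `E` on vertex type `V`,
capacity function `c`, source `s` (no in-edges) and sink `t` (no out-edges). -/
structure Network (V : Type) where
  E : Set (V × V)
  loopless : ∀ v, (v, v) ∉ E
  c : V × V → ℝ≥0
  s : V
  t : V
  ne : s ≠ t
  no_in_s : ∀ v, (v, s) ∉ E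
  no_out_t : ∀ v, (t, v) ∉ E

variable {V : Type}

/-- Out-degree of `f` at `x`: sum of `f` over edges leaving `x`. -/
noncomputable def dplus (f : V × V → ℝ≥0) (x : V) : ℝ≥0∞ := ∑' v, (f (x, v) : ℝ≥0∞)

/-- In-degree of `f` at `x`: sum of `f` over edges entering `x`. -/
noncomputable def dminus (f : V × V → ℝ≥0) (x : V) : ℝ≥0∞ := ∑' v, (f (v, x) : ℝ≥0∞)

/-- A flow: nonnegative, supported on the edges, below capacity, Kirchhoff away from s,t. -/
structure IsFlow (N : Network V) (f : V × V → ℝ≥0) : Prop where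
  supp : ∀ e, e ∉ N.E → f e = 0
  cap : ∀ e, f e ≤ N.c e
  kirchhoff : ∀ x, x ≠ N.s → x ≠ N.t → dplus f x = dminus f x

noncomputable def flowValue (N : Network V) (f : V × V → ℝ≥0) : ℝ≥0∞ := dplus f N.s

/-- An s–t cut, given by its vertex side `S`. -/
def IsCut (N : Network V) (S : Set V) : Prop := N.s ∈ S ∧ N.t ∉ S

/-- The edges of the cut `E(S, V∖S)`. -/
def cutEdges (N : Network V) (S : Set V) : Set (V × V) := {e ∈ N.E | e.1 ∈ S ∧ e.2 ∉ S}

noncomputable def cutCap (N : Network V) (S : Set V) : ℝ≥0∞ :=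
  ∑' e : cutEdges N S, (N.c e : ℝ≥0∞)

noncomputable def cutFlow (N : Network V) (f : V × V → ℝ≥0) (S : Set V) : ℝ≥0∞ :=
  ∑' e : cutEdges N S, (f e : ℝ≥0∞)

/-- `f` saturates the cut `E(S,V∖S)` and vanishes on the reverse cut `E(V∖S,S)`. -/
def Orthogonal (N : Network V) (f : V × V → ℝ≥0) (S : Set V) : Prop :=
  (∀ e ∈ cutEdges N S, f e = N.c e) ∧ (∀ e ∈ cutEdges N Sᶜ, f e = 0)

/-- A weighted web. -/
structure Web (V : Type) where
  D : Set (V × V)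
  A : Set V
  B : Set V
  w : V → ℝ≥0

def IsWalk (E : Set (V × V)) (p : List V) : Prop := p.Chain' (fun a b => (a, b) ∈ E)

/-- A (finite, directed) path/walk from `A` to `B` in the digraph with edge set `E`. -/
def IsABPath (E : Set (V × V)) (A B : Set V) (p : List V) : Prop :=
  IsWalk E p ∧ (∃ a ∈ A, p.head? = some a) ∧ (∃ b ∈ B, p.getLast? = some b)

/-- `S` is `A`–`B`-separating in the web `W`. -/
def Separates (W : Web V) (S : Set V) : Prop :=
  ∀ p : List V, IsABPath W.D W.A W.B p → ∃ x ∈ S, x ∈ p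

/-- A current in a weighted web. -/
structure IsCurrent (W : Web V) (f : V × V → ℝ≥0) : Prop where
  supp : ∀ e, e ∉ W.D → f e = 0
  out_le : ∀ x, dplus f x ≤ (W.w x : ℝ≥0∞)
  in_le : ∀ x, dminus f x ≤ (W.w x : ℝ≥0∞)
  flow_ineq : ∀ x, x ∉ W.A → dplus f x ≤ dminus f x
  a_in : ∀ a ∈ W.A, dminus f a = 0
  b_out : ∀ b ∈ W.B, dplus f b = 0

def SAT (W : Web V) (f : V × V → ℝ≥0) : Set V :=
  {x | x ∈ W.A ∨ dminus f x = (W.w x : ℝ≥0∞)}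

def SINK (f : V × V → ℝ≥0) : Set V := {x | dplus f x = 0}

def TER (W : Web V) (f : V × V → ℝ≥0) : Set V := SAT W f ∩ SINK f

/-- The set of vertices separated ("roofed") from `B` by `S`. -/
def RF (W : Web V) (S : Set V) : Set V :=
  {v | ∀ p : List V, IsABPath W.D {v} W.B p → ∃ x ∈ S, x ∈ p}

/-- The essential vertices of `S`: those `x ∈ S` not separated from `B` by `S∖{x}`. -/
def Essential (W : Web V) (S : Set V) : Set V :=
  {x ∈ S | ∃ p : List V, IsABPath W.D {x} W.B p ∧ ∀ y ∈ p, y ∈ S → y = x}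

def RFo (W : Web V) (S : Set V) : Set V := RF W S \ Essential W S

/-- A wave: a current whose terminal set separates, sending no flow outside `RF(TER f)`. -/
def IsWave (W : Web V) (f : V × V → ℝ≥0) : Prop :=
  IsCurrent W f ∧ Separates W (TER W f) ∧ ∀ x, x ∉ RF W (TER W f) → dplus f x = 0

def Bipartite (W : Web V) : Prop :=
  (∀ v : V, v ∈ W.A ∪ W.B) ∧ ∀ e ∈ W.D, e.1 ∈ W.A ∧ e.2 ∈ W.B

def IsHindrance (W : Web V) (f : V × V → ℝ≥0) : Prop :=
  IsWave W f ∧ ∃ a ∈ W.A, a ∉ Essential W (TER W f) ∧ dplus f a < (W.w a : ℝ≥0∞)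

def Hindered (W : Web V) : Prop := ∃ f, IsHindrance W f

def Loose (W : Web V) : Prop :=
  (∀ f, IsWave W f → ∀ e, f e = 0) ∧ ¬ IsHindrance W (fun _ => 0)

/-- A web-flow: a current satisfying Kirchhoff's law outside `A ∪ B`. -/
def IsWebFlow (W : Web V) (f : V × V → ℝ≥0) : Prop :=
  IsCurrent W f ∧ ∀ x, x ∉ W.A ∪ W.B → dplus f x = dminus f x

/-- The quotient web `Γ/f`. -/
def quotWeb (W : Web V) (f : V × V → ℝ≥0) : Web V where
  D := {e ∈ W.D | e.1 ∉ RFo W (TER W f) ∧ e.2 ∉ RFo W (TER W f)}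
  A := Essential W (TER W f)
  B := W.B
  w := W.w

/-- `f ↷ g`: `f` plus the restriction of `g` to the edges of `Γ/f`. -/
noncomputable def hetz (W : Web V) (f g : V × V → ℝ≥0) : V × V → ℝ≥0 :=
  fun e => f e + if e ∈ (quotWeb W f).D then g e else 0

/-- The residual network `RES(Δ,f)`. -/
noncomputable def resNetwork (N : Network V) (f : V × V → ℝ≥0) : Network V where
  E := N.E ∪ {e | (e.2, e.1) ∈ N.E ∧ e.2 ≠ N.s ∧ e.1 ≠ N.t}
  loopless := fun v hv => hv.elim (N.loopless v) (fun h => N.loopless v h.1)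
  c := fun e => if e ∈ N.E then N.c e - f e else f (e.2, e.1)
  s := N.s
  t := N.t
  ne := N.ne
  no_in_s := fun v hv => hv.elim (N.no_in_s v) (fun h => h.2.1 rfl)
  no_out_t := fun v hv => hv.elim (N.no_out_t v) (fun h => h.2.2 rfl)

/-- `f ⊕ g`, for `g` a flow in the residual network. -/
noncomputable def oplus (N : Network V) (f g : V × V → ℝ≥0) : V × V → ℝ≥0 :=
  fun e => if e ∈ N.E then f e + g e - g (e.2, e.1) else 0

/-- A finite directed s–t path. -/
def IsSTPath (N : Network V) (p : List V) : Prop :=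
  IsWalk N.E p ∧ p.head? = some N.s ∧ p.getLast? = some N.t ∧ p.Nodup

/-- A mundane flow: a nonnegative combination of (characteristic functions of) s–t paths. -/
def IsMundane (N : Network V) (f : V × V → ℝ≥0) : Prop :=
  ∃ (ι : Type) (θ : ι → ℝ≥0) (P : ι → List V),
    (∀ i, 0 < θ i) ∧ (∀ i, IsSTPath N (P i)) ∧
    ∀ e : V × V, (f e : ℝ≥0∞) = ∑' i, if e ∈ (P i).zip (P i).tail then (θ i : ℝ≥0∞) else 0

def NetLocallyFinite (N : Network V) : Prop :=
  ∀ v : V, {e ∈ N.E | e.1 = v ∨ e.2 = v}.Finite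

/-- A finite-cut-respecting flow. -/
def IsFCR (N : Network V) (f : V × V → ℝ≥0) : Prop :=
  IsFlow N f ∧ ∀ S : Set V, N.s ∈ S → (cutEdges N S).Finite →
    (N.t ∈ S → cutFlow N f S = cutFlow N f Sᶜ) ∧
    (N.t ∉ S → cutFlow N f S = cutFlow N f Sᶜ + flowValue N f)

/-- A cut-respecting flow. -/
def IsCR (N : Network V) (f : V × V → ℝ≥0) : Prop :=
  IsFCR N f ∧ ∀ S : Set V, IsCut N S →
    flowValue N f + cutFlow N f Sᶜ ≤ cutCap N S ∧
    cutFlow N f S ≤ cutCap N Sᶜ + flowValue N f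



/-- Duplicate decomposition. -/
lemma dup_decomp {x : V} {l : List V} (h : List.Duplicate x l) :
    ∃ l1 l2, l = l1 ++ x :: l2 ∧ x ∈ l2 := by
  induction h with
  | cons_mem hmem => exact ⟨[], _, rfl, hmem⟩
  | cons_duplicate _ ih =>
      obtain ⟨l1, l2, rfl, hx⟩ := ih
      exact ⟨_ :: l1, l2, rfl, hx⟩

/-- Shortcut a duplicate, preserving chain, head?, getLast?. -/
lemma shortcut {r : V → V → Prop} {l : List V} (hc : l.Chain' r) (hnd : ¬ l.Nodup) :
    ∃ l' : List V, l'.Chain' r ∧ l'.head? = l.head? ∧ l'.getLast? = l.getLast? ∧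
      l'.length < l.length := by
  obtain ⟨x, hdup⟩ := List.exists_duplicate_iff_not_nodup.2 hnd
  obtain ⟨l1, l2, rfl, hx⟩ := dup_decomp hdup
  obtain ⟨l2a, l2b, rfl⟩ := List.append_of_mem hx
  refine ⟨l1 ++ x :: l2b, ?_, ?_, ?_, ?_⟩
  · have hc' : List.Chain' r ((l1 ++ x :: l2a) ++ (x :: l2b)) := by
      simpa [List.append_assoc] using hc
    unfold List.Chain' at hc' ⊢
    rw [List.isChain_append] at hc' ⊢
    obtain ⟨h1, h2, h3⟩ := hc'
    rw [List.isChain_append] at h1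
    refine ⟨h1.1, h2, ?_⟩
    intro y hy z hz
    exact h1.2.2 y (by simpa [List.getLast?_append] using hy) z (by simpa using hz)
  · simp [List.head?_append]
  · rw [show x :: (l2a ++ x :: l2b) = (x :: l2a) ++ (x :: l2b) by simp]
    rw [List.getLast?_append, List.getLast?_append, List.getLast?_append]
    cases hys : (x :: l2b).getLast? with
    | none => simp [List.getLast?_eq_none_iff] at hys
    | some y => simp
  · simp [List.length_append]

lemma nodup_chain_of_chain {r : V → V → Prop} :
    ∀ n (l : List V), l.length ≤ n → l.Chain' r →
    ∃ l' : List V, l'.Chain' r ∧ l'.head? = l.head? ∧ l'.getLast? = l.getLast? ∧ l'.Nodup := by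
  intro n
  induction n with
  | zero =>
      intro l hl _
      interval_cases h : l.length
      · exact ⟨l, ‹_›, rfl, rfl, by simp [List.length_eq_zero_iff.1 h]⟩
  | succ n ih =>
      intro l hl hc
      by_cases hnd : l.Nodup
      · exact ⟨l, hc, rfl, rfl, hnd⟩
      · obtain ⟨l', hc', hh, hg, hlen⟩ := shortcut hc hnd
        obtain ⟨l'', h1, h2, h3, h4⟩ := ih l' (by omega) hc'
        exact ⟨l'', h1, h2.trans hh, h3.trans hg, h4⟩

lemma exists_nodup_chain {r : V → V → Prop} {a b : V} (h : Relation.ReflTransGen r a b) :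
    ∃ l : List V, l.Chain' r ∧ l.head? = some a ∧ l.getLast? = some b ∧ l.Nodup := by
  obtain ⟨l, hc, hlast⟩ := List.exists_isChain_cons_of_relationReflTransGen h
  obtain ⟨l', h1, h2, h3, h4⟩ := nodup_chain_of_chain (a :: l).length (a :: l) le_rfl
    (show List.Chain' r (a :: l) from hc)
  exact ⟨l', h1, by simpa using h2, by rw [h3, List.getLast?_eq_getLast (by simp), hlast], h4⟩


lemma zip_tail_cons {a b : V} {l : List V} :
    (a :: b :: l).zip (a :: b :: l).tail = (a, b) :: ((b :: l).zip (b :: l).tail) := by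
  simp [List.zip]

lemma mem_zip_chain' {r : V → V → Prop} :
    ∀ {l : List V}, l.Chain' r → ∀ {e : V × V}, e ∈ l.zip l.tail → r e.1 e.2 := by
  intro l
  induction l with
  | nil => simp
  | cons a l ih =>
      cases l with
      | nil => simp
      | cons b l' =>
          intro hc e he
          rw [zip_tail_cons] at he
          rcases List.mem_cons.1 he with h | h
          · subst h; exact (List.isChain_cons_cons.1 hc).1
          · exact ih (List.isChain_cons_cons.1 hc).2 h

lemma succ_unique : ∀ {l : List V}, l.Nodup → ∀ {x v w : V},
    (x, v) ∈ l.zip l.tail → (x, w) ∈ l.zip l.tail → v = w := by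
  intro l
  induction l with
  | nil => simp
  | cons a l ih =>
      cases l with
      | nil => simp
      | cons b l' =>
          intro hnd x v w hv hw
          rw [zip_tail_cons] at hv hw
          have ha : a ∉ b :: l' := (List.nodup_cons.1 hnd).1
          rcases List.mem_cons.1 hv with h1 | h1 <;> rcases List.mem_cons.1 hw with h2 | h2
          · rw [Prod.mk.injEq] at h1 h2
            rw [h1.2, h2.2]
          · exfalso
            rw [Prod.mk.injEq] at h1
            exact ha (h1.1 ▸ (List.of_mem_zip h2).1)
          · exfalso
            rw [Prod.mk.injEq] at h2
            exact ha (h2.1 ▸ (List.of_mem_zip h1).1)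
          · exact ih (List.nodup_cons.1 hnd).2 h1 h2

lemma pred_unique : ∀ {l : List V}, l.Nodup → ∀ {x v w : V},
    (v, x) ∈ l.zip l.tail → (w, x) ∈ l.zip l.tail → v = w := by
  intro l
  induction l with
  | nil => simp
  | cons a l ih =>
      cases l with
      | nil => simp
      | cons b l' =>
          intro hnd x v w hv hw
          rw [zip_tail_cons] at hv hw
          have hb : b ∉ l' := (List.nodup_cons.1 (List.nodup_cons.1 hnd).2).1
          rcases List.mem_cons.1 hv with h1 | h1 <;> rcases List.mem_cons.1 hw with h2 | h2
          · rw [Prod.mk.injEq] at h1 h2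
            rw [h1.1, h2.1]
          · exfalso
            rw [Prod.mk.injEq] at h1
            have := (List.of_mem_zip h2).2
            rw [List.tail_cons] at this
            exact hb (h1.2 ▸ this)
          · exfalso
            rw [Prod.mk.injEq] at h2
            have := (List.of_mem_zip h1).2
            rw [List.tail_cons] at this
            exact hb (h2.2 ▸ this)
          · exact ih (List.nodup_cons.1 hnd).2 h1 h2

/-- no predecessor of the head -/
lemma no_pred_head {l : List V} (hnd : l.Nodup) {h : V} (hh : l.head? = some h)
    {v : V} (hv : (v, h) ∈ l.zip l.tail) : False := by
  cases l with
  | nil => simp at hh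
  | cons a l' =>
      have : h = a := by simpa using hh.symm
      subst this
      have := (List.of_mem_zip hv).2
      rw [List.tail_cons] at this
      exact (List.nodup_cons.1 hnd).1 this

lemma mem_of_getLast?' : ∀ {l : List V} {b : V}, l.getLast? = some b → b ∈ l := by
  intro l b h
  cases l with
  | nil => simp at h
  | cons a l' =>
      rw [List.getLast?_eq_getLast (by simp)] at h
      have : (a :: l').getLast (by simp) = b := by injection h
      exact this ▸ List.getLast_mem _

/-- no successor of the last -/
lemma no_succ_last : ∀ {l : List V}, l.Nodup → ∀ {b : V}, l.getLast? = some b →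
    ∀ {v : V}, (b, v) ∈ l.zip l.tail → False := by
  intro l
  induction l with
  | nil => simp
  | cons a l ih =>
      cases l with
      | nil => simp
      | cons c l' =>
          intro hnd b hb v hv
          rw [zip_tail_cons] at hv
          have hlast : (c :: l').getLast? = some b := by
            rw [← hb]
            exact (List.getLast?_cons_cons ..).symm ▸ rfl
          rcases List.mem_cons.1 hv with h1 | h1
          · rw [Prod.mk.injEq] at h1
            have hbmem : b ∈ c :: l' := mem_of_getLast?' hlast
            exact (List.nodup_cons.1 hnd).1 (h1.1 ▸ hbmem)
          · exact ih (List.nodup_cons.1 hnd).2 hlast h1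

lemma exists_succ : ∀ {l : List V}, ∀ {x b : V}, x ∈ l → l.getLast? = some b → x ≠ b →
    ∃ v, (x, v) ∈ l.zip l.tail := by
  intro l
  induction l with
  | nil => simp
  | cons a l ih =>
      cases l with
      | nil =>
          intro x b hx hb hxb
          simp at hx hb
          exact absurd (hx.trans hb) hxb
      | cons c l' =>
          intro x b hx hb hxb
          rw [zip_tail_cons]
          rcases List.mem_cons.1 hx with h1 | h1
          · exact ⟨c, by simp [h1]⟩
          · obtain ⟨v, hv⟩ := ih h1 (by rw [← hb]; exact (List.getLast?_cons_cons ..).symm ▸ rfl) hxb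
            exact ⟨v, List.mem_cons_of_mem _ hv⟩

lemma exists_pred : ∀ {l : List V}, ∀ {x h : V}, x ∈ l → l.head? = some h → x ≠ h →
    ∃ v, (v, x) ∈ l.zip l.tail := by
  intro l
  induction l with
  | nil => simp
  | cons a l ih =>
      cases l with
      | nil =>
          intro x h hx hh hxh
          simp at hx hh
          exact absurd (hx.trans hh) hxh
      | cons c l' =>
          intro x h hx hh hxh
          have : h = a := by simpa using hh.symm
          subst this
          rw [zip_tail_cons]
          rcases List.mem_cons.1 hx with h1 | h1
          · exact absurd h1 hxh
          · by_cases hxc : x = c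
            · exact ⟨h, by simp [hxc]⟩
            · obtain ⟨v, hv⟩ := ih h1 rfl hxc
              exact ⟨v, List.mem_cons_of_mem _ hv⟩

lemma no_swap {l : List V} (hnd : l.Nodup) {u v : V}
    (h1 : (u, v) ∈ l.zip l.tail) (h2 : (v, u) ∈ l.zip l.tail) : False := by
  induction l with
  | nil => simp at h1
  | cons a l ih =>
      cases l with
      | nil => simp at h1
      | cons b l' =>
          rw [zip_tail_cons] at h1 h2
          have ha : a ∉ b :: l' := (List.nodup_cons.1 hnd).1
          rcases List.mem_cons.1 h1 with g1 | g1 <;> rcases List.mem_cons.1 h2 with g2 | g2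
          · rw [Prod.mk.injEq] at g1 g2
            apply ha
            rw [show a = b from g2.1.symm.trans g1.2]
            exact List.mem_cons_self
          · rw [Prod.mk.injEq] at g1
            have := (List.of_mem_zip g2).2
            rw [List.tail_cons] at this
            exact ha (g1.1 ▸ List.mem_cons_of_mem _ this)
          · rw [Prod.mk.injEq] at g2
            have := (List.of_mem_zip g1).2
            rw [List.tail_cons] at this
            exact ha (g2.1 ▸ List.mem_cons_of_mem _ this)
          · exact ih (List.nodup_cons.1 hnd).2 g1 g2

section MainAux
variable {V : Type}

lemma aux_dplus_eq [Fintype V] (f : V × V → ℝ≥0) (x : V) :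
    dplus f x = ((∑ v, f (x, v) : ℝ≥0) : ℝ≥0∞) := by
  rw [dplus, tsum_fintype, ENNReal.coe_finset_sum]

lemma aux_dminus_eq [Fintype V] (f : V × V → ℝ≥0) (x : V) :
    dminus f x = ((∑ v, f (v, x) : ℝ≥0) : ℝ≥0∞) := by
  rw [dminus, tsum_fintype, ENNReal.coe_finset_sum]

lemma sum_ite_unique [Fintype V] (Q : V → Prop) [DecidablePred Q] [Decidable (∃ v, Q v)] (ε : ℝ≥0)
    (huniq : ∀ v w, Q v → Q w → v = w) :
    (∑ v, (if Q v then ε else 0)) = if ∃ v, Q v then ε else 0 := by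
  by_cases hex : ∃ v, Q v
  · obtain ⟨v0, hv0⟩ := hex
    rw [if_pos ⟨v0, hv0⟩,
      Finset.sum_eq_single_of_mem v0 (Finset.mem_univ v0)
        (fun w _ hw => if_neg (fun hQ => hw (huniq w v0 hQ hv0)))]
    exact if_pos hv0
  · rw [if_neg hex]
    exact Finset.sum_eq_zero (fun v _ => if_neg (fun h => hex ⟨v, h⟩))

end MainAux

theorem stmt0 [Fintype V] (N : Network V) :
    ∃ (f : V × V → ℝ≥0) (S : Set V), IsFlow N f ∧ IsCut N S ∧ Orthogonal N f S := by
  classical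
  set K : Set (V × V → ℝ≥0) := {f | IsFlow N f} with hKdef
  set val : (V × V → ℝ≥0) → ℝ≥0 := fun f => ∑ v, f (N.s, v) with hvaldef
  have hKsub : K ⊆ Set.univ.pi (fun e => Set.Icc 0 (N.c e)) := by
    intro f hf e _
    exact ⟨zero_le, hf.cap e⟩
  have hKclosed : IsClosed K := by
    have hKeq : K = {f : V × V → ℝ≥0 | ∀ e, e ∉ N.E → f e = 0} ∩
        ({f : V × V → ℝ≥0 | ∀ e, f e ≤ N.c e} ∩
        {f : V × V → ℝ≥0 | ∀ x, x ≠ N.s → x ≠ N.t → (∑ v, f (x, v)) = ∑ v, f (v, x)}) := by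
      ext f
      constructor
      · intro hf
        refine ⟨hf.supp, hf.cap, fun x hx1 hx2 => ?_⟩
        have := hf.kirchhoff x hx1 hx2
        rw [aux_dplus_eq, aux_dminus_eq] at this
        exact_mod_cast this
      · rintro ⟨h1, h2, h3⟩
        refine ⟨h1, h2, fun x hx1 hx2 => ?_⟩
        rw [aux_dplus_eq, aux_dminus_eq]
        exact_mod_cast h3 x hx1 hx2
    rw [hKeq]
    refine IsClosed.inter ?_ (IsClosed.inter ?_ ?_)
    · have : {f : V × V → ℝ≥0 | ∀ e, e ∉ N.E → f e = 0} =
          ⋂ (e) (_ : e ∉ N.E), {f : V × V → ℝ≥0 | f e = 0} := by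
        ext f; simp
      rw [this]
      exact isClosed_iInter fun e => isClosed_iInter fun _ =>
        isClosed_eq (continuous_apply e) continuous_const
    · have : {f : V × V → ℝ≥0 | ∀ e, f e ≤ N.c e} =
          ⋂ (e), {f : V × V → ℝ≥0 | f e ≤ N.c e} := by
        ext f; simp
      rw [this]
      exact isClosed_iInter fun e =>
        isClosed_le (continuous_apply e) continuous_const
    · have : {f : V × V → ℝ≥0 | ∀ x, x ≠ N.s → x ≠ N.t → (∑ v, f (x, v)) = ∑ v, f (v, x)} =
          ⋂ (x) (_ : x ≠ N.s) (_ : x ≠ N.t),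
            {f : V × V → ℝ≥0 | (∑ v, f (x, v)) = ∑ v, f (v, x)} := by
        ext f; simp
      rw [this]
      exact isClosed_iInter fun x => isClosed_iInter fun _ => isClosed_iInter fun _ =>
        isClosed_eq (continuous_finset_sum _ fun v _ => continuous_apply _)
          (continuous_finset_sum _ fun v _ => continuous_apply _)
  have hKcomp : IsCompact K :=
    (isCompact_univ_pi (fun e => isCompact_Icc)).of_isClosed_subset hKclosed hKsub
  have hKne : K.Nonempty := by
    refine ⟨fun _ => 0, ⟨fun e _ => rfl, fun e => zero_le, fun x _ _ => ?_⟩⟩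
    simp [dplus, dminus]
  have hvalcont : Continuous val := continuous_finset_sum _ (fun v _ => continuous_apply _)
  obtain ⟨f, hfK, hmax⟩ := hKcomp.exists_isMaxOn hKne hvalcont.continuousOn
  have hf : IsFlow N f := hfK
  set R : V → V → Prop := fun u v =>
    ((u, v) ∈ N.E ∧ f (u, v) < N.c (u, v)) ∨ ((v, u) ∈ N.E ∧ 0 < f (v, u)) with hRdef
  set S : Set V := {v | Relation.ReflTransGen R N.s v} with hSdef
  have hsS : N.s ∈ S := Relation.ReflTransGen.refl
  -- the key claim: t is not reachable in the residual graph
  have htS : N.t ∉ S := by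
    intro htS
    have hreach : Relation.ReflTransGen R N.s N.t := htS
    obtain ⟨l, hchain, hhead, hlast, hnd⟩ := exists_nodup_chain hreach
    obtain ⟨l₀, rfl⟩ : ∃ l₀, l = N.s :: l₀ := by
      cases l with
      | nil => simp at hhead
      | cons a l₀ =>
          have : a = N.s := by simpa using hhead
          exact ⟨l₀, by rw [this]⟩
    cases l₀ with
    | nil =>
        have : N.s = N.t := by simpa using hlast
        exact N.ne this
    | cons v1 rest =>
    set l : List V := N.s :: v1 :: rest with hldef
    have hhead' : l.head? = some N.s := rfl
    set steps : List (V × V) := l.zip l.tail with hstepsdef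
    have hstepsR : ∀ e ∈ steps, R e.1 e.2 := fun e he => mem_zip_chain' hchain he
    set fwd : V × V → Prop := fun e => e ∈ N.E ∧ f e < N.c e with hfwddef
    set g : V × V → ℝ≥0 := fun e => if fwd e then N.c e - f e else f (e.2, e.1) with hgdef
    have hstep1 : (N.s, v1) ∈ steps := by
      rw [hstepsdef, hldef, zip_tail_cons]
      exact List.mem_cons_self
    have hTne : steps.toFinset.Nonempty := ⟨(N.s, v1), List.mem_toFinset.2 hstep1⟩
    set ε : ℝ≥0 := steps.toFinset.inf' hTne g with hεdef
    have hgpos : ∀ e ∈ steps, 0 < g e := by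
      rintro ⟨u, v⟩ he
      rw [hgdef]
      dsimp only
      by_cases hfw : fwd (u, v)
      · rw [if_pos hfw]
        exact tsub_pos_iff_lt.2 hfw.2
      · rw [if_neg hfw]
        rcases hstepsR _ he with h | h
        · exact absurd h hfw
        · exact h.2
    have hεpos : 0 < ε :=
      (Finset.lt_inf'_iff hTne).2 (fun e he => hgpos e (List.mem_toFinset.1 he))
    have hεle : ∀ e ∈ steps, ε ≤ g e := fun e he => Finset.inf'_le g (List.mem_toFinset.2 he)
    set p : V × V → ℝ≥0 := fun e => if e ∈ steps ∧ fwd e then ε else 0 with hpdef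
    set m : V × V → ℝ≥0 := fun e => if (e.2, e.1) ∈ steps ∧ ¬ fwd (e.2, e.1) then ε else 0
      with hmdef
    have hm_le : ∀ e, m e ≤ f e := by
      rintro ⟨u, v⟩
      rw [hmdef]
      dsimp only
      split_ifs with h
      · have h2 := hεle _ h.1
        rw [hgdef] at h2
        dsimp only at h2
        rw [if_neg h.2] at h2
        exact h2
      · exact zero_le
    set f' : V × V → ℝ≥0 := fun e => f e + p e - m e with hf'def
    have hf'eq : ∀ e, f' e + m e = f e + p e := by
      intro e
      rw [hf'def]
      dsimp only
      exact tsub_add_cancel_of_le ((hm_le e).trans (self_le_add_right _ _))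
    have key1 : ∀ x v : V, p (x, v) + m (v, x) = if (x, v) ∈ steps then ε else 0 := by
      intro x v
      rw [hpdef, hmdef]
      dsimp only
      by_cases hmem : (x, v) ∈ steps
      · by_cases hfw : fwd (x, v)
        · rw [if_pos ⟨hmem, hfw⟩, if_neg (fun h => h.2 hfw), if_pos hmem, add_zero]
        · rw [if_neg (fun h => hfw h.2), if_pos ⟨hmem, hfw⟩, if_pos hmem, zero_add]
      · rw [if_neg (fun h => hmem h.1), if_neg (fun h => hmem h.1), if_neg hmem, add_zero]
    have hOut : ∀ x : V, (∑ v, (if (x, v) ∈ steps then ε else 0)) =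
        if ∃ v, (x, v) ∈ steps then ε else 0 :=
      fun x => sum_ite_unique _ _ (fun v w hv hw => succ_unique hnd hv hw)
    have hIn : ∀ x : V, (∑ v, (if (v, x) ∈ steps then ε else 0)) =
        if ∃ v, (v, x) ∈ steps then ε else 0 :=
      fun x => sum_ite_unique _ _ (fun v w hv hw => pred_unique hnd hv hw)
    have hbal : ∀ x : V, x ≠ N.s → x ≠ N.t →
        ((∃ v, (x, v) ∈ steps) ↔ (∃ v, (v, x) ∈ steps)) := by
      intro x hxs hxt
      constructor
      · rintro ⟨v, hv⟩
        exact exists_pred (List.of_mem_zip hv).1 hhead' hxs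
      · rintro ⟨v, hv⟩
        exact exists_succ (List.mem_of_mem_tail (List.of_mem_zip hv).2) hlast hxt
    -- f' is a flow
    have hf'flow : IsFlow N f' := by
      refine ⟨?_, ?_, ?_⟩
      · intro e he
        have hp0 : p e = 0 := if_neg (fun h => he h.2.1)
        have hm0 : m e = 0 := le_antisymm ((hm_le e).trans (hf.supp e he).le) (zero_le)
        rw [hf'def]
        dsimp only
        rw [hp0, hm0, hf.supp e he]
        simp
      · intro e
        have h1 : f' e ≤ f e + p e := by
          rw [hf'def]; exact tsub_le_self
        by_cases hc : e ∈ steps ∧ fwd e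
        · have hpe : p e = ε := if_pos hc
          have h2 := hεle _ hc.1
          rw [hgdef] at h2
          dsimp only at h2
          rw [if_pos hc.2] at h2
          calc f' e ≤ f e + p e := h1
            _ = f e + ε := by rw [hpe]
            _ ≤ f e + (N.c e - f e) := add_le_add le_rfl h2
            _ = N.c e := add_tsub_cancel_of_le (hf.cap e)
        · have hpe : p e = 0 := if_neg hc
          calc f' e ≤ f e + p e := h1
            _ = f e := by rw [hpe, add_zero]
            _ ≤ N.c e := hf.cap e
      · intro x hxs hxt
        rw [aux_dplus_eq, aux_dminus_eq]
        norm_cast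
        have hA : (∑ v, f (x, v)) = ∑ v, f (v, x) := by
          have := hf.kirchhoff x hxs hxt
          rw [aux_dplus_eq, aux_dminus_eq] at this
          exact_mod_cast this
        have e1 : (∑ v, f' (x, v)) + ∑ v, m (x, v) = (∑ v, f (x, v)) + ∑ v, p (x, v) := by
          rw [← Finset.sum_add_distrib, ← Finset.sum_add_distrib]
          exact Finset.sum_congr rfl (fun v _ => hf'eq (x, v))
        have e2 : (∑ v, f' (v, x)) + ∑ v, m (v, x) = (∑ v, f (v, x)) + ∑ v, p (v, x) := by
          rw [← Finset.sum_add_distrib, ← Finset.sum_add_distrib]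
          exact Finset.sum_congr rfl (fun v _ => hf'eq (v, x))
        have e3 : (∑ v, p (x, v)) + ∑ v, m (v, x) = (∑ v, p (v, x)) + ∑ v, m (x, v) := by
          rw [← Finset.sum_add_distrib, ← Finset.sum_add_distrib]
          have h1 : (∑ v, (p (x, v) + m (v, x))) = if ∃ v, (x, v) ∈ steps then ε else 0 := by
            rw [← hOut x]
            exact Finset.sum_congr rfl (fun v _ => key1 x v)
          have h2 : (∑ v, (p (v, x) + m (x, v))) = if ∃ v, (v, x) ∈ steps then ε else 0 := by
            rw [← hIn x]
            exact Finset.sum_congr rfl (fun v _ => key1 v x)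
          rw [h1, h2]
          exact if_congr (hbal x hxs hxt) rfl rfl
        have hbig : (∑ v, f' (x, v)) + ((∑ v, m (x, v)) + ∑ v, m (v, x)) =
            (∑ v, f' (v, x)) + ((∑ v, m (x, v)) + ∑ v, m (v, x)) := by
          calc (∑ v, f' (x, v)) + ((∑ v, m (x, v)) + ∑ v, m (v, x))
              = ((∑ v, f' (x, v)) + ∑ v, m (x, v)) + ∑ v, m (v, x) := by ring
            _ = ((∑ v, f (x, v)) + ∑ v, p (x, v)) + ∑ v, m (v, x) := by rw [e1]
            _ = (∑ v, f (x, v)) + ((∑ v, p (x, v)) + ∑ v, m (v, x)) := by ring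
            _ = (∑ v, f (v, x)) + ((∑ v, p (v, x)) + ∑ v, m (x, v)) := by rw [hA, e3]
            _ = ((∑ v, f' (v, x)) + ∑ v, m (v, x)) + ∑ v, m (x, v) := by rw [e2]; ring
            _ = (∑ v, f' (v, x)) + ((∑ v, m (x, v)) + ∑ v, m (v, x)) := by ring
        exact add_right_cancel hbig
    -- value increases: contradiction with maximality
    have hfwd1 : fwd (N.s, v1) := by
      rcases hstepsR _ hstep1 with h | h
      · exact h
      · exact absurd h.1 (N.no_in_s v1)
    have hms : ∀ v, m (N.s, v) = 0 := by
      intro v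
      rw [hmdef]
      dsimp only
      rw [if_neg]
      rintro ⟨hmem, -⟩
      exact no_pred_head hnd hhead' hmem
    have e1s : (∑ v, f' (N.s, v)) + ∑ v, m (N.s, v) =
        (∑ v, f (N.s, v)) + ∑ v, p (N.s, v) := by
      rw [← Finset.sum_add_distrib, ← Finset.sum_add_distrib]
      exact Finset.sum_congr rfl (fun v _ => hf'eq (N.s, v))
    have hms0 : (∑ v, m (N.s, v)) = 0 := Finset.sum_eq_zero (fun v _ => hms v)
    have hp1 : ε ≤ ∑ v, p (N.s, v) := by
      have hpe : p (N.s, v1) = ε := if_pos ⟨hstep1, hfwd1⟩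
      calc ε = p (N.s, v1) := hpe.symm
        _ ≤ ∑ v, p (N.s, v) :=
            Finset.single_le_sum (f := fun v => p (N.s, v)) (fun i _ => zero_le) (Finset.mem_univ v1)
    have hval' : val f + ε ≤ val f' := by
      calc val f + ε ≤ (∑ v, f (N.s, v)) + ∑ v, p (N.s, v) := add_le_add le_rfl hp1
        _ = (∑ v, f' (N.s, v)) + ∑ v, m (N.s, v) := e1s.symm
        _ = val f' := by rw [hms0, add_zero]
    have hle : val f' ≤ val f := hmax hf'flow
    have : val f < val f := lt_of_lt_of_le (lt_add_of_pos_right _ hεpos) (hval'.trans hle)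
    exact absurd this (lt_irrefl _)
  refine ⟨f, S, hf, ⟨hsS, htS⟩, ?_, ?_⟩
  · rintro ⟨u, v⟩ ⟨heE, huS, hvS⟩
    by_contra hne
    have hlt : f (u, v) < N.c (u, v) := lt_of_le_of_ne (hf.cap _) hne
    exact hvS (Relation.ReflTransGen.tail huS (Or.inl ⟨heE, hlt⟩))
  · rintro ⟨u, v⟩ ⟨heE, huS, hvS⟩
    by_contra hne
    have hpos : 0 < f (u, v) := zero_lt_iff.mpr hne
    have hvS' : v ∈ S := by
      by_contra hv
      exact hvS hv
    exact huS (Relation.ReflTransGen.tail hvS' (Or.inr ⟨heE, hpos⟩))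
end

section
/- Let (f_i : i ∈ I) be a family of waves in a weighted web, indexed by a totally ordered set I, such that f_i ≤ f_j (edgewise) whenever i ≤ j. Then the pointwise supremum f = sup_i f_i is a wave. -/
open scoped ENNReal NNReal Classical

variable {V : Type}

-- Auxiliary lemma 1: pigeonhole / cofinality
lemma aux_cofinal_pigeonhole {V : Type} {I : Type} [LinearOrder I] [Nonempty I]
    (p : List V) (g : I → V) (hg : ∀ i, g i ∈ p) :
    ∃ x ∈ p, ∀ i, ∃ j, i ≤ j ∧ g j = x := by
  by_contra h
  push_neg at h
  classical
  have hch : ∀ x : V, x ∈ p → ∃ i, ∀ j, i ≤ j → g j ≠ x := by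
    intro x hx
    obtain ⟨i, hi⟩ := h x hx
    exact ⟨i, hi⟩
  choose c hc using hch
  let s : Finset I := p.toFinset.attach.image (fun x => c x.1 (List.mem_toFinset.mp x.2))
  obtain ⟨M, hM⟩ := s.exists_le
  have hgM : g M ∈ p := hg M
  have hmem : c (g M) hgM ∈ s := by
    apply Finset.mem_image.mpr
    exact ⟨⟨g M, List.mem_toFinset.mpr hgM⟩, Finset.mem_attach _ _, rfl⟩
  exact hc (g M) hgM M (hM _ hmem) rfl

-- Auxiliary lemma 2: tsum/iSup swap for directed families
lemma aux_tsum_iSup_swap {V : Type} {I : Type} [LinearOrder I] [Nonempty I]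
    (g : I → V → ℝ≥0∞) (hmono : ∀ i j, i ≤ j → ∀ v, g i v ≤ g j v) :
    ∑' v, ⨆ i, g i v = ⨆ i, ∑' v, g i v := by
  apply le_antisymm
  · rw [ENNReal.tsum_eq_iSup_sum]
    apply iSup_le
    intro s
    have key : ∑ v ∈ s, ⨆ i, g i v = ⨆ i, ∑ v ∈ s, g i v := by
      induction s using Finset.induction with
      | empty => simp
      | @insert a s ha ih =>
        rw [Finset.sum_insert ha, ih, ENNReal.iSup_add_iSup]
        · refine iSup_congr fun i => ?_
          rw [Finset.sum_insert ha]
        · intro i j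
          refine ⟨max i j, add_le_add (hmono i (max i j) (le_max_left _ _) a) ?_⟩
          exact Finset.sum_le_sum fun v _ => hmono j (max i j) (le_max_right _ _) v
    rw [key]
    exact iSup_mono fun i => ENNReal.sum_le_tsum s
  · exact iSup_le fun i => ENNReal.tsum_le_tsum fun v => le_iSup (fun i => g i v) i

theorem stmt1 (W : Web V) (I : Type) [LinearOrder I] (F : I → (V × V → ℝ≥0))
    (hwave : ∀ i, IsWave W (F i)) (hmono : ∀ i j, i ≤ j → ∀ e, F i e ≤ F j e) :
    IsWave W (fun e => ⨆ i, F i e) := by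
  by_cases hI : Nonempty I
  case neg =>
    -- I is empty: the supremum is the zero function, which is a wave.
    have hIe : IsEmpty I := not_nonempty_iff.mp hI
    have hzero : ∀ e : V × V, (⨆ i, F i e) = 0 := fun e => ciSup_of_empty _
    have hdp : ∀ x, dplus (fun e => ⨆ i, F i e) x = 0 := by
      intro x
      unfold dplus
      simp [hzero]
    have hdm : ∀ x, dminus (fun e => ⨆ i, F i e) x = 0 := by
      intro x
      unfold dminus
      simp [hzero]
    refine ⟨⟨fun e _ => hzero e, fun x => by rw [hdp x]; exact zero_le,
      fun x => by rw [hdm x]; exact zero_le,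
      fun x _ => by rw [hdp x]; exact zero_le, fun a _ => hdm a, fun b _ => hdp b⟩,
      ?_, fun x _ => hdp x⟩
    intro p hp
    obtain ⟨hw, ⟨a, ha, hhead⟩, _⟩ := hp
    refine ⟨a, ⟨Or.inl ha, hdp a⟩, List.mem_of_mem_head? hhead⟩
  case pos =>
    -- I is nonempty.
    set f : V × V → ℝ≥0 := fun e => ⨆ i, F i e with hf
    -- boundedness of the family at each edge
    have hbdd : ∀ e : V × V, BddAbove (Set.range fun i => F i e) := by
      intro e
      refine ⟨W.w e.1, ?_⟩
      rintro _ ⟨i, rfl⟩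
      have h1 : (F i e : ℝ≥0∞) ≤ (W.w e.1 : ℝ≥0∞) := by
        refine le_trans ?_ ((hwave i).1.out_le e.1)
        have := ENNReal.le_tsum (f := fun v => (F i (e.1, v) : ℝ≥0∞)) e.2
        simpa [dplus] using this
      exact_mod_cast h1
    have hcoe : ∀ e : V × V, ((f e : ℝ≥0) : ℝ≥0∞) = ⨆ i, ((F i e : ℝ≥0∞)) :=
      fun e => ENNReal.coe_iSup (hbdd e)
    have hdplus : ∀ x, dplus f x = ⨆ i, dplus (F i) x := by
      intro x
      unfold dplus
      calc ∑' v, ((f (x, v) : ℝ≥0) : ℝ≥0∞) = ∑' v, ⨆ i, ((F i (x, v) : ℝ≥0∞)) := by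
            exact tsum_congr fun v => hcoe (x, v)
        _ = ⨆ i, ∑' v, ((F i (x, v) : ℝ≥0∞)) :=
            aux_tsum_iSup_swap _ (fun i j hij v => ENNReal.coe_le_coe.mpr (hmono i j hij _))
    have hdminus : ∀ x, dminus f x = ⨆ i, dminus (F i) x := by
      intro x
      unfold dminus
      calc ∑' v, ((f (v, x) : ℝ≥0) : ℝ≥0∞) = ∑' v, ⨆ i, ((F i (v, x) : ℝ≥0∞)) := by
            exact tsum_congr fun v => hcoe (v, x)
        _ = ⨆ i, ∑' v, ((F i (v, x) : ℝ≥0∞)) :=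
            aux_tsum_iSup_swap _ (fun i j hij v => ENNReal.coe_le_coe.mpr (hmono i j hij _))
    have hdpmono : ∀ x, ∀ i j : I, i ≤ j → dplus (F i) x ≤ dplus (F j) x :=
      fun x i j hij => ENNReal.tsum_le_tsum fun v => ENNReal.coe_le_coe.mpr (hmono i j hij _)
    have hdmmono : ∀ x, ∀ i j : I, i ≤ j → dminus (F i) x ≤ dminus (F j) x :=
      fun x i j hij => ENNReal.tsum_le_tsum fun v => ENNReal.coe_le_coe.mpr (hmono i j hij _)
    -- key: a vertex cofinally in the terminal sets is in TER f
    have hTERsup : ∀ y : V, (∀ i, ∃ j, i ≤ j ∧ y ∈ TER W (F j)) → y ∈ TER W f := by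
      intro y hy
      constructor
      · -- y ∈ SAT W f
        by_cases hyA : y ∈ W.A
        · exact Or.inl hyA
        · right
          obtain ⟨j, _, hjSAT, _⟩ := hy (Classical.arbitrary I)
          have hsat : dminus (F j) y = (W.w y : ℝ≥0∞) := by
            rcases hjSAT with h | h
            · exact absurd h hyA
            · exact h
          refine le_antisymm ?_ ?_
          · rw [hdminus]
            exact iSup_le fun i => (hwave i).1.in_le y
          · rw [hdminus, ← hsat]
            exact le_iSup (fun i => dminus (F i) y) j
      · -- y ∈ SINK f
        show dplus f y = 0
        rw [hdplus, ENNReal.iSup_eq_zero]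
        intro i
        obtain ⟨j, hij, _, hjSINK⟩ := hy i
        exact le_antisymm (le_trans (hdpmono y i j hij) (le_of_eq hjSINK)) (zero_le)
    -- f is a current
    have hcur : IsCurrent W f := by
      refine ⟨?_, ?_, ?_, ?_, ?_, ?_⟩
      · intro e he
        show (⨆ i, F i e) = 0
        have : ∀ i, F i e = 0 := fun i => (hwave i).1.supp e he
        simp [this]
      · intro x
        rw [hdplus]
        exact iSup_le fun i => (hwave i).1.out_le x
      · intro x
        rw [hdminus]
        exact iSup_le fun i => (hwave i).1.in_le x
      · intro x hx
        rw [hdplus, hdminus]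
        exact iSup_mono fun i => (hwave i).1.flow_ineq x hx
      · intro a ha
        rw [hdminus, ENNReal.iSup_eq_zero]
        exact fun i => (hwave i).1.a_in a ha
      · intro b hb
        rw [hdplus, ENNReal.iSup_eq_zero]
        exact fun i => (hwave i).1.b_out b hb
    refine ⟨hcur, ?_, ?_⟩
    · -- TER f separates
      intro p hp
      have hsep : ∀ i, ∃ x, x ∈ TER W (F i) ∧ x ∈ p := by
        intro i
        obtain ⟨x, hx1, hx2⟩ := (hwave i).2.1 p hp
        exact ⟨x, hx1, hx2⟩
      choose g hg1 hg2 using hsep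
      obtain ⟨x, hxp, hx⟩ := aux_cofinal_pigeonhole p g hg2
      refine ⟨x, ?_, hxp⟩
      apply hTERsup
      intro i
      obtain ⟨j, hij, hgj⟩ := hx i
      exact ⟨j, hij, hgj ▸ hg1 j⟩
    · -- no flow outside RF (TER f)
      intro x hx
      rw [hdplus, ENNReal.iSup_eq_zero]
      intro i
      by_contra hne
      -- for all j ≥ i, dplus (F j) x ≠ 0, hence x ∈ RF (TER (F j))
      have hRF : ∀ j, i ≤ j → x ∈ RF W (TER W (F j)) := by
        intro j hij
        by_contra hxRF
        have h0 : dplus (F j) x = 0 := (hwave j).2.2 x hxRF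
        exact hne (le_antisymm (le_trans (hdpmono x i j hij) (le_of_eq h0)) (zero_le))
      -- x ∉ RF (TER f) : get a path from x to B avoiding TER f
      simp only [RF, Set.mem_setOf_eq, not_forall] at hx
      obtain ⟨p, hpath, hpavoid⟩ := hx
      push_neg at hpavoid
      -- each TER (F j) (for j ≥ i) meets p
      have hmeet : ∀ j : I, ∃ y, y ∈ TER W (F (max i j)) ∧ y ∈ p := by
        intro j
        exact hRF (max i j) (le_max_left _ _) p hpath
      choose g hg1 hg2 using hmeet
      obtain ⟨y, hyp, hy⟩ := aux_cofinal_pigeonhole p g hg2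
      have hyTER : y ∈ TER W f := by
        apply hTERsup
        intro k
        obtain ⟨j, hkj, hgj⟩ := hy k
        exact ⟨max i j, le_trans hkj (le_max_right _ _), hgj ▸ hg1 j⟩
      exact hpavoid y hyTER hyp
end

section
/- Every weighted web contains a maximal wave with respect to the edgewise order (f ≤ g iff f(e) ≤ g(e) for all edges e). -/
open scoped ENNReal NNReal Classical

variable {V : Type}

/-! ### Auxiliary lemmas for `stmt2` -/

lemma myTsumISupChain {ι : Sort*} [Nonempty ι] {α : Type} (g : ι → α → ℝ≥0∞)
    (hdir : ∀ i j, ∃ k, (∀ a, g i a ≤ g k a) ∧ (∀ a, g j a ≤ g k a)) :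
    ∑' a, ⨆ i, g i a = ⨆ i, ∑' a, g i a := by
  refine le_antisymm ?_ (iSup_le fun i => ENNReal.tsum_le_tsum fun a => le_iSup (fun j => g j a) i)
  rw [ENNReal.tsum_eq_iSup_sum]
  refine iSup_le fun s => ?_
  classical
  have key : ∑ a ∈ s, ⨆ i, g i a ≤ ⨆ i, ∑ a ∈ s, g i a := by
    induction s using Finset.induction with
    | empty => simp
    | @insert a s ha ih =>
      rw [Finset.sum_insert ha]
      calc (⨆ i, g i a) + ∑ x ∈ s, ⨆ i, g i x
          ≤ (⨆ i, g i a) + ⨆ i, ∑ x ∈ s, g i x := by gcongr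
        _ = ⨆ i, (g i a + ∑ x ∈ s, g i x) := by
            refine ENNReal.iSup_add_iSup fun i j => ?_
            obtain ⟨k, hik, hjk⟩ := hdir i j
            exact ⟨k, add_le_add (hik a) (Finset.sum_le_sum fun x _ => hjk x)⟩
        _ = ⨆ i, ∑ x ∈ insert a s, g i x := by
            refine iSup_congr fun i => ?_
            rw [Finset.sum_insert ha]
  exact key.trans (iSup_mono fun i => ENNReal.sum_le_tsum s)

lemma myDplusMono {f g : V × V → ℝ≥0} (h : ∀ e, f e ≤ g e) (x : V) :
    dplus f x ≤ dplus g x :=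
  ENNReal.tsum_le_tsum fun v => ENNReal.coe_le_coe.mpr (h (x, v))

lemma myDminusMono {f g : V × V → ℝ≥0} (h : ∀ e, f e ≤ g e) (x : V) :
    dminus f x ≤ dminus g x :=
  ENNReal.tsum_le_tsum fun v => ENNReal.coe_le_coe.mpr (h (v, x))

lemma myZeroWave (W : Web V) : IsWave W (fun _ => 0) := by
  have hd : ∀ x, dplus (fun _ : V × V => (0 : ℝ≥0)) x = 0 := by
    intro x; simp [dplus]
  have hm : ∀ x, dminus (fun _ : V × V => (0 : ℝ≥0)) x = 0 := by
    intro x; simp [dminus]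
  refine ⟨⟨fun e _ => rfl, fun x => by simp [hd], fun x => by simp [hm],
    fun x _ => by simp [hd], fun a _ => hm a, fun b _ => hd b⟩, ?_, fun x _ => hd x⟩
  rintro p ⟨-, ⟨a, ha, hhead⟩, -⟩
  refine ⟨a, ⟨Or.inl ha, hd a⟩, ?_⟩
  exact List.mem_of_mem_head? (by rw [hhead]; rfl)

theorem stmt2 (W : Web V) :
    ∃ f, IsWave W f ∧ ∀ g, IsWave W g → (∀ e, f e ≤ g e) → g = f := by
  suffices h : ∀ c ⊆ {f : V × V → ℝ≥0 | IsWave W f}, IsChain (· ≤ ·) c →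
      ∀ y ∈ c, ∃ ub ∈ {f : V × V → ℝ≥0 | IsWave W f}, ∀ z ∈ c, z ≤ ub by
    obtain ⟨f, -, hf⟩ := zorn_le_nonempty₀ _ h (fun _ => 0) (myZeroWave W)
    exact ⟨f, hf.1, fun g hg hle =>
      funext fun e => le_antisymm (hf.2 hg (fun e => hle e) e) (hle e)⟩
  intro c hcs hc f₀ hf₀c
  haveI : Nonempty c := ⟨⟨f₀, hf₀c⟩⟩
  -- the pointwise supremum of the chain
  set m : V × V → ℝ≥0 := fun e => ⨆ f : c, (f : V × V → ℝ≥0) e with hm_def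
  have hcur' : ∀ f : c, IsCurrent W (f : V × V → ℝ≥0) := fun f => (hcs f.2).1
  have hbdd : ∀ e : V × V, BddAbove (Set.range fun f : c => (f : V × V → ℝ≥0) e) := by
    intro e
    refine ⟨W.w e.1, ?_⟩
    rintro _ ⟨f, rfl⟩
    have h1 : ((f : V × V → ℝ≥0) e : ℝ≥0∞) ≤ dplus (f : V × V → ℝ≥0) e.1 := by
      have := ENNReal.le_tsum (f := fun v => ((f : V × V → ℝ≥0) (e.1, v) : ℝ≥0∞)) e.2
      simpa [dplus] using this
    exact ENNReal.coe_le_coe.mp (h1.trans ((hcur' f).out_le e.1))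
  have hcoe : ∀ e : V × V, (m e : ℝ≥0∞) = ⨆ f : c, ((f : V × V → ℝ≥0) e : ℝ≥0∞) :=
    fun e => ENNReal.coe_iSup (hbdd e)
  have hdir : ∀ i j : c, ∃ k : c, (∀ e, (i : V × V → ℝ≥0) e ≤ (k : V × V → ℝ≥0) e) ∧
      (∀ e, (j : V × V → ℝ≥0) e ≤ (k : V × V → ℝ≥0) e) := by
    intro i j
    rcases hc.total i.2 j.2 with h | h
    · exact ⟨j, fun e => h e, fun e => le_rfl⟩
    · exact ⟨i, fun e => le_rfl, fun e => h e⟩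
  have hdplus : ∀ x, dplus m x = ⨆ f : c, dplus (f : V × V → ℝ≥0) x := by
    intro x
    have : dplus m x = ∑' v, ⨆ f : c, ((f : V × V → ℝ≥0) (x, v) : ℝ≥0∞) := by
      unfold dplus; exact tsum_congr fun v => hcoe (x, v)
    rw [this]
    exact myTsumISupChain _ fun i j => by
      obtain ⟨k, hik, hjk⟩ := hdir i j
      exact ⟨k, fun v => ENNReal.coe_le_coe.mpr (hik (x, v)),
        fun v => ENNReal.coe_le_coe.mpr (hjk (x, v))⟩
  have hdminus : ∀ x, dminus m x = ⨆ f : c, dminus (f : V × V → ℝ≥0) x := by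
    intro x
    have : dminus m x = ∑' v, ⨆ f : c, ((f : V × V → ℝ≥0) (v, x) : ℝ≥0∞) := by
      unfold dminus; exact tsum_congr fun v => hcoe (v, x)
    rw [this]
    exact myTsumISupChain _ fun i j => by
      obtain ⟨k, hik, hjk⟩ := hdir i j
      exact ⟨k, fun v => ENNReal.coe_le_coe.mpr (hik (v, x)),
        fun v => ENNReal.coe_le_coe.mpr (hjk (v, x))⟩
  have hfm : ∀ f ∈ c, ∀ e, f e ≤ m e := fun f hf e =>
    le_ciSup (hbdd e) (⟨f, hf⟩ : c)
  -- m is a current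
  have hcur : IsCurrent W m := by
    refine ⟨?_, ?_, ?_, ?_, ?_, ?_⟩
    · intro e he
      refine le_antisymm (ciSup_le fun f => le_of_eq ((hcur' f).supp e he)) zero_le
    · intro x; rw [hdplus]; exact iSup_le fun f => (hcur' f).out_le x
    · intro x; rw [hdminus]; exact iSup_le fun f => (hcur' f).in_le x
    · intro x hx; rw [hdplus, hdminus]
      exact iSup_mono fun f => (hcur' f).flow_ineq x hx
    · intro a ha; rw [hdminus]
      exact le_antisymm (iSup_le fun f => le_of_eq ((hcur' f).a_in a ha)) zero_le
    · intro b hb; rw [hdplus]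
      exact le_antisymm (iSup_le fun f => le_of_eq ((hcur' f).b_out b hb)) zero_le
  have hSAT : ∀ f ∈ c, SAT W f ⊆ SAT W m := by
    intro f hf x hx
    rcases hx with hx | hx
    · exact Or.inl hx
    · refine Or.inr (le_antisymm (hcur.in_le x) ?_)
      calc (W.w x : ℝ≥0∞) = dminus f x := hx.symm
        _ ≤ dminus m x := myDminusMono (hfm f hf) x
  have hmono : ∀ {u v : V × V → ℝ≥0} (y : V), (∀ e, u e ≤ v e) → dplus u y ≠ 0 →
      dplus v y ≠ 0 := by
    intro u v y huv hu hv
    exact hu (le_antisymm (le_of_le_of_eq (myDplusMono huv y) hv) zero_le)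
  -- find a member of the chain dominating f₁ whose dplus is nonzero wherever m's is, on p
  have hfind : ∀ f₁, f₁ ∈ c → ∀ p : List V, ∃ f' ∈ c, (∀ e, f₁ e ≤ f' e) ∧
      ∀ y ∈ p, dplus m y ≠ 0 → dplus f' y ≠ 0 := by
    intro f₁ hf₁ p
    induction p with
    | nil => exact ⟨f₁, hf₁, fun e => le_rfl, by simp⟩
    | cons a p ih =>
      obtain ⟨f', hf', hle, hp⟩ := ih
      by_cases h : dplus m a = 0
      · refine ⟨f', hf', hle, ?_⟩
        intro y hy hym
        rcases List.mem_cons.mp hy with rfl | hy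
        · exact absurd h hym
        · exact hp y hy hym
      · have : ∃ g : c, dplus (g : V × V → ℝ≥0) a ≠ 0 := by
          by_contra hcon
          push_neg at hcon
          rw [hdplus] at h
          exact h (by simp [hcon])
        obtain ⟨g, hg⟩ := this
        rcases hc.total hf' g.2 with hfg | hgf
        · refine ⟨g, g.2, fun e => (hle e).trans (hfg e), ?_⟩
          intro y hy hym
          rcases List.mem_cons.mp hy with rfl | hy
          · exact hg
          · exact hmono y (fun e => hfg e) (hp y hy hym)
        · refine ⟨f', hf', hle, ?_⟩
          intro y hy hym
          rcases List.mem_cons.mp hy with rfl | hy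
          · exact hmono y (fun e => hgf e) hg
          · exact hp y hy hym
  -- TER m separates
  have hsep : Separates W (TER W m) := by
    intro p hp
    obtain ⟨f', hf', -, hkey⟩ := hfind f₀ hf₀c p
    obtain ⟨x, hxT, hxp⟩ := (hcs hf').2.1 p hp
    refine ⟨x, ⟨hSAT f' hf' hxT.1, ?_⟩, hxp⟩
    by_contra h
    exact hkey x hxp h hxT.2
  -- wave condition 3
  have hwv3 : ∀ x, x ∉ RF W (TER W m) → dplus m x = 0 := by
    intro x hx
    rw [hdplus]
    refine le_antisymm (iSup_le fun f => ?_) zero_le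
    simp only [RF, Set.mem_setOf_eq, not_forall] at hx
    obtain ⟨p, hpath, havoid⟩ := hx
    push_neg at havoid
    obtain ⟨f', hf', hle, hkey⟩ := hfind (f : V × V → ℝ≥0) f.2 p
    have hclaim : ∀ y ∈ p, y ∉ TER W f' := by
      intro y hyp hyT
      by_cases hdm : dplus m y = 0
      · exact havoid y ⟨hSAT f' hf' hyT.1, hdm⟩ hyp
      · exact hkey y hyp hdm hyT.2
    have hxRF : x ∉ RF W (TER W f') := by
      intro hRF
      obtain ⟨y, hyT, hyp⟩ := hRF p hpath
      exact hclaim y hyp hyT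
    have h0 : dplus f' x = 0 := (hcs hf').2.2 x hxRF
    exact le_of_le_of_eq (myDplusMono hle x) h0
  exact ⟨m, ⟨hcur, hsep, hwv3⟩, fun f hf e => hfm f hf e⟩
end

section
/- Let Δ=(D,c,s,t) be a countable network. Then there exists an s–t cut F whose capacity c[F] equals σ, the infimum of capacities of all s–t cuts; i.e., the infimum is attained. -/
open scoped ENNReal NNReal Classical

variable {V : Type}

theorem stmt14 [Countable V] (N : Network V) :
    ∃ S, IsCut N S ∧ cutCap N S = ⨅ (T : Set V) (_ : IsCut N T), cutCap N T := by
  classical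
  set σ := ⨅ (T : Set V) (_ : IsCut N T), cutCap N T with hσ
  have hcut0 : IsCut N ({N.t}ᶜ : Set V) := ⟨by simp [N.ne], by simp⟩
  by_cases htop : σ = ⊤
  · refine ⟨{N.t}ᶜ, hcut0, ?_⟩
    have h1 : σ ≤ cutCap N {N.t}ᶜ := iInf₂_le _ hcut0
    rw [htop, top_le_iff] at h1
    rw [h1, htop]
  · have hεne : ∀ n : ℕ, (1 : ℝ≥0∞) / (n + 1) ≠ 0 := by
      intro n
      simp [ENNReal.div_eq_zero_iff, ENNReal.add_eq_top]
    have hseq : ∀ n : ℕ, ∃ S, IsCut N S ∧ cutCap N S < σ + 1 / (n + 1) := by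
      intro n
      have hlt : σ < σ + 1 / (n + 1) := ENNReal.lt_add_right htop (hεne n)
      obtain ⟨T, hT⟩ := iInf_lt_iff.1 hlt
      obtain ⟨hTc, hTlt⟩ := iInf_lt_iff.1 hT
      exact ⟨T, hTc, hTlt⟩
    choose S hScut hSlt using hseq
    set U : Ultrafilter ℕ := Filter.hyperfilter ℕ with hU
    set L : Set V := {v | {n | v ∈ S n} ∈ U} with hL
    have hLcut : IsCut N L := by
      constructor
      · have h : {n | N.s ∈ S n} = Set.univ := by
          ext n; simp [(hScut n).1]
        show {n | N.s ∈ S n} ∈ U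
        rw [h]; exact Filter.univ_mem
      · intro h
        have h2 : {n | N.t ∈ S n} = ∅ := by
          ext n; simp [(hScut n).2]
        have h3 : {n | N.t ∈ S n} ∈ U := h
        rw [h2] at h3
        exact Filter.empty_notMem _ h3
    have hmem : ∀ e ∈ cutEdges N L, {n | e ∈ cutEdges N (S n)} ∈ U := by
      rintro e ⟨heE, he1, he2⟩
      have h2 : {n | e.2 ∈ S n}ᶜ ∈ U := Ultrafilter.compl_mem_iff_notMem.2 he2
      have h1 : {n | e.1 ∈ S n} ∈ U := he1
      filter_upwards [h1, h2] with n hn1 hn2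
      exact ⟨heE, hn1, hn2⟩
    refine ⟨L, hLcut, le_antisymm ?_ (iInf₂_le _ hLcut)⟩
    have hrw : ∀ T : Set V, cutCap N T =
        ∑' e : V × V, (cutEdges N T).indicator (fun e => (N.c e : ℝ≥0∞)) e := by
      intro T
      exact tsum_subtype (cutEdges N T) (fun e => (N.c e : ℝ≥0∞))
    rw [hrw, ENNReal.tsum_eq_iSup_sum]
    refine iSup_le fun F => ?_
    refine ENNReal.le_of_forall_pos_le_add fun ε hε _ => ?_
    obtain ⟨m, hm⟩ := exists_nat_gt (ε⁻¹ : ℝ≥0)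
    have hεm : (1 : ℝ≥0∞) / (m + 1) ≤ (ε : ℝ≥0∞) := by
      rw [one_div, ← inv_inv (ε : ℝ≥0∞)]
      apply ENNReal.inv_le_inv.2
      rw [← ENNReal.coe_inv (ne_of_gt hε)]
      calc ((ε⁻¹ : ℝ≥0) : ℝ≥0∞) ≤ (m : ℝ≥0∞) := by
            exact_mod_cast hm.le
        _ ≤ (m : ℝ≥0∞) + 1 := le_self_add
    have hBig : ({n | m ≤ n} ∩
        ⋂ e ∈ F, {n | e ∈ cutEdges N L → e ∈ cutEdges N (S n)}) ∈ U := by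
      apply Filter.inter_mem
      · exact Nat.hyperfilter_le_atTop (Filter.mem_atTop m)
      · rw [Filter.biInter_finset_mem]
        intro e _
        by_cases hc : e ∈ cutEdges N L
        · exact Filter.mem_of_superset (hmem e hc) fun n hn _ => hn
        · exact Filter.mem_of_superset Filter.univ_mem fun n _ h => absurd h hc
    obtain ⟨n, hnm, hnF⟩ := Filter.nonempty_of_mem hBig
    have hnF' : ∀ e ∈ F, e ∈ cutEdges N L → e ∈ cutEdges N (S n) := by
      intro e he
      exact Set.mem_iInter₂.1 hnF e he
    calc (∑ e ∈ F, (cutEdges N L).indicator (fun e => (N.c e : ℝ≥0∞)) e)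
        ≤ ∑ e ∈ F, (cutEdges N (S n)).indicator (fun e => (N.c e : ℝ≥0∞)) e := by
          refine Finset.sum_le_sum fun e he => ?_
          by_cases hc : e ∈ cutEdges N L
          · rw [Set.indicator_of_mem hc, Set.indicator_of_mem (hnF' e he hc)]
          · simp [Set.indicator_of_notMem hc]
      _ ≤ cutCap N (S n) := by
          rw [hrw]
          exact ENNReal.sum_le_tsum F
      _ ≤ σ + 1 / (n + 1) := (hSlt n).le
      _ ≤ σ + 1 / (m + 1) := by
          gcongr
          exact hnm
      _ ≤ σ + ε := by gcongr
end

section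
/- In every countable network, the supremum τ_m of the values of mundane flows equals the infimum σ of the capacities of s–t cuts. -/
open scoped ENNReal NNReal Classical

variable {V : Type}

namespace MFMC

open List

variable {V : Type}

/-- The list of edges (consecutive pairs) of a list. -/
abbrev zE (p : List V) : List (V × V) := p.zip p.tail

lemma mem_zE_iff {p : List V} {a b : V} :
    (a, b) ∈ zE p ↔ ∃ i : ℕ, p[i]? = some a ∧ p[i+1]? = some b := by
  induction p with
  | nil => simp [zE]
  | cons x q ih =>
    cases q with
    | nil =>
      simp only [zE, List.tail_cons, List.zip_nil_right, List.not_mem_nil, false_iff]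
      rintro ⟨i, hi, hj⟩
      rcases i with _ | i
      · simp at hj
      · simp at hi
    | cons y r =>
      simp only [zE, List.tail_cons, List.zip_cons_cons, List.mem_cons, Prod.mk.injEq]
      constructor
      · rintro (⟨rfl, rfl⟩ | h)
        · exact ⟨0, by simp⟩
        · obtain ⟨i, hi, hj⟩ := ih.1 h
          exact ⟨i + 1, by simpa using hi, by simpa using hj⟩
      · rintro ⟨i, hi, hj⟩
        rcases i with _ | i
        · simp at hi hj
          exact Or.inl ⟨hi.symm, hj.symm⟩
        · right
          exact ih.2 ⟨i, by simpa using hi, by simpa using hj⟩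

lemma rel_of_mem_zE {R : V → V → Prop} : ∀ {p : List V}, p.Chain' R → ∀ {a b : V},
    (a, b) ∈ zE p → R a b := by
  intro p
  induction p with
  | nil => intro _ a b h; simp [zE] at h
  | cons x q ih =>
    cases q with
    | nil => intro _ a b h; simp [zE] at h
    | cons y r =>
      intro hc a b h
      rw [List.Chain', List.isChain_cons_cons] at hc
      rcases (by simpa [zE] using h : (a = x ∧ b = y) ∨ (a, b) ∈ zE (y :: r)) with ⟨rfl, rfl⟩ | h'
      · exact hc.1
      · exact ih hc.2 h'

lemma chain'_of_forall_zE {R : V → V → Prop} : ∀ {p : List V},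
    (∀ a b, (a, b) ∈ zE p → R a b) → p.Chain' R := by
  intro p
  induction p with
  | nil => intro _; exact List.isChain_nil
  | cons x q ih =>
    cases q with
    | nil => intro _; exact List.isChain_singleton x
    | cons y r =>
      intro h
      rw [List.Chain', List.isChain_cons_cons]
      refine ⟨h x y (by simp [zE]), ih ?_⟩
      intro a b hab
      exact h a b (by simp [zE] at hab ⊢; tauto)

lemma index_unique {p : List V} (hnd : p.Nodup) {i j : ℕ} {a : V}
    (hi : p[i]? = some a) (hj : p[j]? = some a) : i = j := by
  have h1 : i < p.length := (List.getElem?_eq_some_iff.1 hi).1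
  exact (List.getElem?_inj h1 hnd).1 (hi.trans hj.symm)

lemma succ_unique {p : List V} (hnd : p.Nodup) {a b b' : V}
    (h : (a, b) ∈ zE p) (h' : (a, b') ∈ zE p) : b = b' := by
  obtain ⟨i, hia, hib⟩ := mem_zE_iff.1 h
  obtain ⟨j, hja, hjb⟩ := mem_zE_iff.1 h'
  have : i = j := index_unique hnd hia hja
  subst this
  exact Option.some_injective _ (hib.symm.trans hjb)

lemma pred_unique {p : List V} (hnd : p.Nodup) {a a' b : V}
    (h : (a, b) ∈ zE p) (h' : (a', b) ∈ zE p) : a = a' := by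
  obtain ⟨i, hia, hib⟩ := mem_zE_iff.1 h
  obtain ⟨j, hja, hjb⟩ := mem_zE_iff.1 h'
  have : i + 1 = j + 1 := index_unique hnd hib hjb
  have : i = j := by omega
  subst this
  exact Option.some_injective _ (hia.symm.trans hja)

lemma mem_left_of_zE {p : List V} {a b : V} (h : (a, b) ∈ zE p) : a ∈ p := by
  obtain ⟨i, hia, _⟩ := mem_zE_iff.1 h
  exact List.mem_of_getElem? hia

lemma mem_right_of_zE {p : List V} {a b : V} (h : (a, b) ∈ zE p) : b ∈ p := by
  obtain ⟨i, _, hib⟩ := mem_zE_iff.1 h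
  exact List.mem_of_getElem? hib

lemma no_pred_head {p : List V} (hnd : p.Nodup) {s : V} (hh : p.head? = some s) {a : V} :
    (a, s) ∉ zE p := by
  intro h
  obtain ⟨i, _, hib⟩ := mem_zE_iff.1 h
  have h0 : p[0]? = some s := by rw [← List.head?_eq_getElem?]; exact hh
  have : i + 1 = 0 := index_unique hnd hib h0
  omega

lemma no_succ_last {p : List V} (hnd : p.Nodup) {t : V} (hl : p.getLast? = some t) {b : V} :
    (t, b) ∉ zE p := by
  intro h
  obtain ⟨i, hia, hib⟩ := mem_zE_iff.1 h
  have hlen : p.length - 1 < p.length := by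
    rcases p with _ | ⟨x, q⟩
    · simp at hl
    · simp
  have h0 : p[p.length - 1]? = some t := by rw [← List.getLast?_eq_getElem?]; exact hl
  have : i = p.length - 1 := index_unique hnd hia h0
  have hib' : i + 1 < p.length := (List.getElem?_eq_some_iff.1 hib).1
  omega

lemma exists_succ {p : List V} {t x : V} (hl : p.getLast? = some t) (hx : x ∈ p)
    (hxt : x ≠ t) : ∃ b, (x, b) ∈ zE p := by
  obtain ⟨i, hi⟩ := List.mem_iff_getElem?.1 hx
  have hilen : i < p.length := (List.getElem?_eq_some_iff.1 hi).1
  by_cases hlast : i + 1 < p.length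
  · exact ⟨p[i+1], mem_zE_iff.2 ⟨i, hi, by simp [hlast]⟩⟩
  · exfalso
    have : i = p.length - 1 := by omega
    subst this
    rw [← List.getLast?_eq_getElem?, hl] at hi
    exact hxt (by simpa using hi.symm)

lemma exists_pred {p : List V} {s x : V} (hh : p.head? = some s) (hx : x ∈ p)
    (hxs : x ≠ s) : ∃ a, (a, x) ∈ zE p := by
  obtain ⟨i, hi⟩ := List.mem_iff_getElem?.1 hx
  rcases i with _ | j
  · rw [← List.head?_eq_getElem?, hh] at hi
    exact absurd (by simpa using hi) hxs.symm
  · have hjlen : j < p.length := by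
      have := (List.getElem?_eq_some_iff.1 hi).1; omega
    exact ⟨p[j], mem_zE_iff.2 ⟨j, by simp [hjlen], hi⟩⟩

lemma exists_crossing {S : Set V} : ∀ {p : List V} {a b : V}, p.head? = some a →
    p.getLast? = some b → a ∈ S → b ∉ S → ∃ e ∈ zE p, e.1 ∈ S ∧ e.2 ∉ S := by
  intro p
  induction p with
  | nil => intro a b h; simp at h
  | cons x q ih =>
    intro a b hh hl ha hb
    have hx : x = a := by simpa using hh
    subst hx
    cases q with
    | nil =>
      exact absurd (show b = x by simpa using hl.symm) (by rintro rfl; exact hb ha)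
    | cons y r =>
      by_cases hy : y ∈ S
      · obtain ⟨e, he, h1, h2⟩ := ih (a := y) (b := b) rfl (by simpa using hl) hy hb
        exact ⟨e, by simp [zE] at he ⊢; tauto, h1, h2⟩
      · exact ⟨(x, y), by simp [zE], ha, hy⟩

lemma exists_nodup_chain'_aux {R : V → V → Prop} : ∀ (n : ℕ) (p : List V), p.length ≤ n →
    p.Chain' R → p ≠ [] →
    ∃ q : List V, q.Chain' R ∧ q.Nodup ∧ q.head? = p.head? ∧ q.getLast? = p.getLast? ∧
      ∀ x ∈ q, x ∈ p := by
  intro n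
  induction n with
  | zero => intro p hp _ hne; exact absurd (List.length_eq_zero_iff.1 (Nat.le_zero.1 hp)) hne
  | succ n ih =>
    intro p hlen hc hne
    rcases p with _ | ⟨a, rest⟩
    · exact absurd rfl hne
    by_cases ha : a ∈ rest
    · obtain ⟨u, w, huw⟩ := List.append_of_mem ha
      subst huw
      have hform : a :: (u ++ a :: w) = (a :: u) ++ (a :: w) := by simp
      have hc' : (a :: w).Chain' R := ((List.isChain_append).1 (hform ▸ hc)).2.1
      have hlen' : (a :: w).length ≤ n := by
        simp only [List.length_cons, List.length_append] at hlen ⊢; omega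
      obtain ⟨q, hq1, hq2, hq3, hq4, hq5⟩ := ih (a :: w) hlen' hc' (by simp)
      refine ⟨q, hq1, hq2, by simpa using hq3, ?_, ?_⟩
      · rw [hq4, hform, List.getLast?_append]
        have : (a :: w).getLast?.isSome := by
          rw [List.getLast?_isSome]; simp
        rcases Option.isSome_iff_exists.1 this with ⟨v, hv⟩
        simp [hv]
      · intro x hx
        have := hq5 x hx
        simp at this ⊢; tauto
    · cases rest with
      | nil =>
        exact ⟨[a], List.isChain_singleton a, by simp, rfl, rfl, by simp⟩
      | cons b r =>
        have hc2 : (b :: r).Chain' R := (List.isChain_cons_cons.1 hc).2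
        obtain ⟨q, hq1, hq2, hq3, hq4, hq5⟩ := ih (b :: r) (by simp only [List.length_cons] at hlen ⊢; omega) hc2 (by simp)
        have hqne : q ≠ [] := by
          intro h; rw [h] at hq3; simp at hq3
        refine ⟨a :: q, ?_, ?_, by simp, ?_, ?_⟩
        · rw [List.Chain', List.isChain_cons]
          refine ⟨?_, hq1⟩
          intro y hy
          rw [hq3] at hy
          have : y = b := by simpa using hy.symm
          subst this
          exact (List.isChain_cons_cons.1 hc).1
        · refine List.nodup_cons.2 ⟨fun h => ha (hq5 a h), hq2⟩
        · rcases q with _ | ⟨c, q'⟩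
          · exact absurd rfl hqne
          · rw [List.getLast?_cons_cons, hq4, List.getLast?_cons_cons]
        · intro x hx
          rcases List.mem_cons.1 hx with rfl | h
          · simp
          · simp [hq5 x h]

lemma exists_nodup_path {R : V → V → Prop} {s t : V} (h : Relation.ReflTransGen R s t) :
    ∃ q : List V, q.Chain' R ∧ q.Nodup ∧ q.head? = some s ∧ q.getLast? = some t := by
  obtain ⟨l, hl, hlast⟩ := List.exists_isChain_cons_of_relationReflTransGen h
  have hc : (s :: l).Chain' R := hl
  have hne : (s :: l) ≠ [] := by simp
  obtain ⟨q, hq1, hq2, hq3, hq4, hq5⟩ :=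
    exists_nodup_chain'_aux (s :: l).length (s :: l) le_rfl hc hne
  refine ⟨q, hq1, hq2, by simpa using hq3, ?_⟩
  rw [hq4, List.getLast?_eq_getLast hne]
  simp [hlast]

section Finite
open List

variable {V : Type}

/-- Excess (out minus in) of a nonnegative integer function, restricted to `E'`. -/
noncomputable def exc (E' : Finset (V × V)) (g : V × V → ℕ) (x : V) : ℤ :=
  ∑ e ∈ E', ((if e.1 = x then (g e : ℤ) else 0) - (if e.2 = x then (g e : ℤ) else 0))

noncomputable def fval (N : Network V) (E' : Finset (V × V)) (g : V × V → ℕ) : ℕ :=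
  ∑ e ∈ E', if e.1 = N.s then g e else 0

def IsFF (N : Network V) (E' : Finset (V × V)) (κ : V × V → ℕ) (g : V × V → ℕ) : Prop :=
  (∀ e, e ∉ E' → g e = 0) ∧ (∀ e, g e ≤ κ e) ∧
    ∀ x, x ≠ N.s → x ≠ N.t → exc E' g x = 0

lemma exc_s {N : Network V} {E' : Finset (V × V)} (hE : ↑E' ⊆ N.E) (g : V × V → ℕ) :
    exc E' g N.s = (fval N E' g : ℤ) := by
  unfold exc fval
  push_cast
  refine Finset.sum_congr rfl fun e he => ?_
  have h2 : e.2 ≠ N.s := fun h => N.no_in_s e.1 (by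
    have : e ∈ N.E := hE he
    rwa [show e = (e.1, N.s) by rw [← h]] at this)
  simp [h2]

lemma cut_identity {N : Network V} {E' : Finset (V × V)} (hE : ↑E' ⊆ N.E) (g : V × V → ℕ)
    (hk : ∀ x, x ≠ N.s → x ≠ N.t → exc E' g x = 0) {S : Set V}
    (hs : N.s ∈ S) (ht : N.t ∉ S) :
    (fval N E' g : ℤ) =
      ∑ e ∈ E'.filter (fun e => e.1 ∈ S ∧ e.2 ∉ S), (g e : ℤ) -
      ∑ e ∈ E'.filter (fun e => e.1 ∉ S ∧ e.2 ∈ S), (g e : ℤ) := by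
  classical
  set T : Finset V :=
    insert N.s ((E'.image Prod.fst ∪ E'.image Prod.snd).filter (fun v => v ∈ S)) with hT
  have hTS : ∀ v ∈ T, v ∈ S := by
    intro v hv
    rcases Finset.mem_insert.1 hv with rfl | hv'
    · exact hs
    · exact (Finset.mem_filter.1 hv').2
  have hT1 : ∀ e ∈ E', (e.1 ∈ T ↔ e.1 ∈ S) := by
    intro e he
    constructor
    · exact hTS e.1
    · intro h
      refine Finset.mem_insert.2 (Or.inr (Finset.mem_filter.2 ⟨?_, h⟩))
      exact Finset.mem_union.2 (Or.inl (Finset.mem_image.2 ⟨e, he, rfl⟩))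
  have hT2 : ∀ e ∈ E', (e.2 ∈ T ↔ e.2 ∈ S) := by
    intro e he
    constructor
    · exact hTS e.2
    · intro h
      refine Finset.mem_insert.2 (Or.inr (Finset.mem_filter.2 ⟨?_, h⟩))
      exact Finset.mem_union.2 (Or.inr (Finset.mem_image.2 ⟨e, he, rfl⟩))
  have step1 : ∑ x ∈ T, exc E' g x = (fval N E' g : ℤ) := by
    rw [Finset.sum_eq_single_of_mem N.s (Finset.mem_insert_self _ _)]
    · exact exc_s hE g
    · intro b hb hbs
      exact hk b hbs (fun h => ht (h ▸ hTS b hb))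
  have step2 : ∑ x ∈ T, exc E' g x =
      ∑ e ∈ E', ((if e.1 ∈ S then (g e : ℤ) else 0) - (if e.2 ∈ S then (g e : ℤ) else 0)) := by
    unfold exc
    rw [Finset.sum_comm]
    refine Finset.sum_congr rfl fun e he => ?_
    rw [Finset.sum_sub_distrib, Finset.sum_ite_eq T e.1 (fun _ => (g e : ℤ)),
      Finset.sum_ite_eq T e.2 (fun _ => (g e : ℤ))]
    rw [if_congr (hT1 e he) rfl rfl, if_congr (hT2 e he) rfl rfl]
  have step3 : ∑ e ∈ E', ((if e.1 ∈ S then (g e : ℤ) else 0) - (if e.2 ∈ S then (g e : ℤ) else 0)) =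
      ∑ e ∈ E', ((if e.1 ∈ S ∧ e.2 ∉ S then (g e : ℤ) else 0) -
        (if e.1 ∉ S ∧ e.2 ∈ S then (g e : ℤ) else 0)) := by
    refine Finset.sum_congr rfl fun e _ => ?_
    by_cases h1 : e.1 ∈ S <;> by_cases h2 : e.2 ∈ S <;> simp [h1, h2]
  rw [← step1, step2, step3, Finset.sum_sub_distrib, ← Finset.sum_filter, ← Finset.sum_filter]

lemma exc_pointwise {E' : Finset (V × V)} (g g' : V × V → ℕ) (e₀ : V × V) (he₀ : e₀ ∈ E')
    (hsame : ∀ e, e ≠ e₀ → g' e = g e) (x : V) :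
    exc E' g' x = exc E' g x + (if e₀.1 = x then ((g' e₀ : ℤ) - g e₀) else 0)
      - (if e₀.2 = x then ((g' e₀ : ℤ) - g e₀) else 0) := by
  have key : exc E' g' x - exc E' g x =
      ∑ e ∈ E', ((if e.1 = x then ((g' e : ℤ) - g e) else 0) -
        (if e.2 = x then ((g' e : ℤ) - g e) else 0)) := by
    unfold exc
    rw [← Finset.sum_sub_distrib]
    refine Finset.sum_congr rfl fun e _ => ?_
    split_ifs <;> ring
  rw [Finset.sum_eq_single_of_mem e₀ he₀] at key
  · linarith [key]
  · intro e he hne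
    simp [hsame e hne]

/-- The residual relation. -/
def resRel (E' : Finset (V × V)) (κ g : V × V → ℕ) (a b : V) : Prop :=
  ((a, b) ∈ E' ∧ g (a, b) < κ (a, b)) ∨ ((b, a) ∈ E' ∧ 0 < g (b, a))

lemma augcore {E' : Finset (V × V)} {κ : V × V → ℕ} :
    ∀ (q : List V) (g : V × V → ℕ), q.Nodup → q.Chain' (resRel E' κ g) →
    (∀ e, e ∉ E' → g e = 0) → (∀ e, g e ≤ κ e) → ∀ a, q.head? = some a →
    ∃ g', (∀ e, e ∉ E' → g' e = 0) ∧ (∀ e, g' e ≤ κ e) ∧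
      ∀ x, exc E' g' x = exc E' g x + (if a = x then 1 else 0)
        - (if q.getLast? = some x then 1 else 0) := by
  intro q
  induction q with
  | nil => intro g _ _ _ _ a ha; simp at ha
  | cons a' rest ih =>
    intro g hnd hc hsupp hcap a ha
    have haa : a' = a := by simpa using ha
    subst haa
    cases rest with
    | nil =>
      refine ⟨g, hsupp, hcap, fun x => ?_⟩
      by_cases hx : x = a'
      · subst hx; simp
      · have h1 : a' ≠ x := Ne.symm hx
        simp [h1]
    | cons b r =>
      have hstep : resRel E' κ g a' b := (List.isChain_cons_cons.1 hc).1
      have hctail : (b :: r).Chain' (resRel E' κ g) := (List.isChain_cons_cons.1 hc).2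
      have hndtail : (b :: r).Nodup := (List.nodup_cons.1 hnd).2
      have hamem : a' ∉ b :: r := (List.nodup_cons.1 hnd).1
      -- pick the modified edge and new function
      rcases hstep with hfwd | hbwd
      case _ =>
        set g₁ : V × V → ℕ := fun e => if e = (a', b) then g e + 1 else g e with hg₁
        have hsame : ∀ e, e ≠ (a', b) → g₁ e = g e := fun e he => by simp [hg₁, he]
        have hsupp₁ : ∀ e, e ∉ E' → g₁ e = 0 := by
          intro e he
          have : e ≠ (a', b) := fun h => he (h ▸ hfwd.1)
          rw [hsame e this]; exact hsupp e he
        have hcap₁ : ∀ e, g₁ e ≤ κ e := by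
          intro e
          by_cases h : e = (a', b)
          · subst h; simpa [hg₁] using hfwd.2
          · rw [hsame e h]; exact hcap e
        have hexc₁ : ∀ x, exc E' g₁ x = exc E' g x + (if a' = x then 1 else 0)
            - (if b = x then 1 else 0) := by
          intro x
          have := exc_pointwise g g₁ (a', b) hfwd.1 hsame x
          simpa [hg₁] using this
        have hchain₁ : (b :: r).Chain' (resRel E' κ g₁) := by
          refine chain'_of_forall_zE fun c d hm => ?_
          have hcd : resRel E' κ g c d := rel_of_mem_zE hctail hm
          have hcmem : c ∈ b :: r := mem_left_of_zE hm
          have hdmem : d ∈ b :: r := mem_right_of_zE hm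
          have h1 : g₁ (c, d) = g (c, d) := hsame _ (by
            rintro h
            injection h with h1 h2
            exact hamem (by rwa [h1] at hcmem))
          have h2 : g₁ (d, c) = g (d, c) := hsame _ (by
            rintro h
            injection h with h1 h2
            exact hamem (by rwa [h1] at hdmem))
          unfold resRel at hcd ⊢
          rw [h1, h2]
          exact hcd
        obtain ⟨g₂, hs₂, hc₂, he₂⟩ := ih g₁ hndtail hchain₁ hsupp₁ hcap₁ b rfl
        refine ⟨g₂, hs₂, hc₂, fun x => ?_⟩
        rw [he₂ x, hexc₁ x, List.getLast?_cons_cons]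
        ring
      case _ =>
        set g₁ : V × V → ℕ := fun e => if e = (b, a') then g e - 1 else g e with hg₁
        have hsame : ∀ e, e ≠ (b, a') → g₁ e = g e := fun e he => by simp [hg₁, he]
        have hsupp₁ : ∀ e, e ∉ E' → g₁ e = 0 := by
          intro e he
          have : e ≠ (b, a') := fun h => he (h ▸ hbwd.1)
          rw [hsame e this]; exact hsupp e he
        have hcap₁ : ∀ e, g₁ e ≤ κ e := by
          intro e
          by_cases h : e = (b, a')
          · subst h; simp only [hg₁, if_pos rfl]
            exact le_trans (Nat.sub_le _ _) (hcap _)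
          · rw [hsame e h]; exact hcap e
        have hexc₁ : ∀ x, exc E' g₁ x = exc E' g x + (if a' = x then 1 else 0)
            - (if b = x then 1 else 0) := by
          intro x
          have := exc_pointwise g g₁ (b, a') hbwd.1 hsame x
          have hval : (g₁ (b, a') : ℤ) - g (b, a') = -1 := by
            simp only [hg₁, if_pos rfl]
            have : 1 ≤ g (b, a') := hbwd.2
            push_cast [Nat.cast_sub this]
            ring
          rw [hval] at this
          rw [this]
          by_cases hxa : a' = x <;> by_cases hxb : b = x <;> simp [hxa, hxb] <;> ring
        have hchain₁ : (b :: r).Chain' (resRel E' κ g₁) := by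
          refine chain'_of_forall_zE fun c d hm => ?_
          have hcd : resRel E' κ g c d := rel_of_mem_zE hctail hm
          have hcmem : c ∈ b :: r := mem_left_of_zE hm
          have hdmem : d ∈ b :: r := mem_right_of_zE hm
          have h1 : g₁ (c, d) = g (c, d) := hsame _ (by
            rintro h
            injection h with h1 h2
            exact hamem (by rwa [h2] at hdmem))
          have h2 : g₁ (d, c) = g (d, c) := hsame _ (by
            rintro h
            injection h with h1 h2
            exact hamem (by rwa [h2] at hcmem))
          unfold resRel at hcd ⊢
          rw [h1, h2]
          exact hcd
        obtain ⟨g₂, hs₂, hc₂, he₂⟩ := ih g₁ hndtail hchain₁ hsupp₁ hcap₁ b rfl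
        refine ⟨g₂, hs₂, hc₂, fun x => ?_⟩
        rw [he₂ x, hexc₁ x, List.getLast?_cons_cons]
        ring
lemma aug {N : Network V} {E' : Finset (V × V)} {κ : V × V → ℕ} (hE : ↑E' ⊆ N.E)
    {g : V × V → ℕ} (hg : IsFF N E' κ g)
    (h : Relation.ReflTransGen (resRel E' κ g) N.s N.t) :
    ∃ g', IsFF N E' κ g' ∧ fval N E' g' = fval N E' g + 1 := by
  obtain ⟨q, hq1, hq2, hq3, hq4⟩ := exists_nodup_path h
  obtain ⟨g', hs', hc', he'⟩ := augcore q g hq2 hq1 hg.1 hg.2.1 N.s hq3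
  have hlast : ∀ x, (q.getLast? = some x) ↔ x = N.t := by
    intro x
    rw [hq4]
    simp [eq_comm]
  have hkirch : ∀ x, x ≠ N.s → x ≠ N.t → exc E' g' x = 0 := by
    intro x hxs hxt
    rw [he' x, hg.2.2 x hxs hxt, if_neg (fun h => hxs h.symm), if_neg (fun h => hxt ((hlast x).1 h))]
    ring
  have hv : exc E' g' N.s = exc E' g N.s + 1 := by
    rw [he' N.s, if_pos rfl, if_neg (fun h => N.ne ((hlast N.s).1 h))]
    ring
  rw [exc_s hE, exc_s hE] at hv
  exact ⟨g', ⟨hs', hc', hkirch⟩, by exact_mod_cast hv⟩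

lemma fval_le {N : Network V} {E' : Finset (V × V)} {κ : V × V → ℕ} {g : V × V → ℕ}
    (hcap : ∀ e, g e ≤ κ e) : fval N E' g ≤ ∑ e ∈ E', κ e := by
  refine Finset.sum_le_sum fun e _ => ?_
  split_ifs
  · exact hcap e
  · exact Nat.zero_le _

lemma exists_maxflow (N : Network V) (E' : Finset (V × V)) (κ : V × V → ℕ)
    (hE : ↑E' ⊆ N.E) :
    ∃ g, IsFF N E' κ g ∧ ¬ Relation.ReflTransGen (resRel E' κ g) N.s N.t := by
  have hzero : IsFF N E' κ (fun _ => 0) :=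
    ⟨fun _ _ => rfl, fun _ => Nat.zero_le _, fun x _ _ => by simp [exc]⟩
  suffices h : ∀ (fuel : ℕ) (g), IsFF N E' κ g → ∑ e ∈ E', κ e + 1 ≤ fuel + fval N E' g →
      ∃ g', IsFF N E' κ g' ∧ ¬ Relation.ReflTransGen (resRel E' κ g') N.s N.t by
    exact h (∑ e ∈ E', κ e + 1) (fun _ => 0) hzero (by omega)
  intro fuel
  induction fuel with
  | zero =>
    intro g hg hb
    have := fval_le (N := N) (E' := E') hg.2.1
    omega
  | succ n ih =>
    intro g hg hb
    by_cases hr : Relation.ReflTransGen (resRel E' κ g) N.s N.t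
    · obtain ⟨g', hg', hv⟩ := aug hE hg hr
      exact ih g' hg' (by omega)
    · exact ⟨g, hg, hr⟩

lemma maxflow_cut {N : Network V} {E' : Finset (V × V)} {κ : V × V → ℕ} (hE : ↑E' ⊆ N.E)
    {g : V × V → ℕ} (hg : IsFF N E' κ g)
    (hnr : ¬ Relation.ReflTransGen (resRel E' κ g) N.s N.t) :
    ∃ S : Set V, N.s ∈ S ∧ N.t ∉ S ∧
      (∑ e ∈ E'.filter (fun e => e.1 ∈ S ∧ e.2 ∉ S), κ e) ≤ fval N E' g := by
  set S : Set V := {x | Relation.ReflTransGen (resRel E' κ g) N.s x} with hS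
  have hs : N.s ∈ S := Relation.ReflTransGen.refl
  have ht : N.t ∉ S := hnr
  have hcross : ∀ e ∈ E'.filter (fun e => e.1 ∈ S ∧ e.2 ∉ S), g e = κ e := by
    intro e he
    have heE := (Finset.mem_filter.1 he).1
    have h1 := (Finset.mem_filter.1 he).2.1
    have h2 := (Finset.mem_filter.1 he).2.2
    by_contra hne
    have hlt : g e < κ e := lt_of_le_of_ne (hg.2.1 e) hne
    have : resRel E' κ g e.1 e.2 := Or.inl ⟨by simpa using heE, by simpa using hlt⟩
    exact h2 (Relation.ReflTransGen.tail h1 this)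
  have hrev : ∀ e ∈ E'.filter (fun e => e.1 ∉ S ∧ e.2 ∈ S), g e = 0 := by
    intro e he
    have heE := (Finset.mem_filter.1 he).1
    have h1 := (Finset.mem_filter.1 he).2.1
    have h2 := (Finset.mem_filter.1 he).2.2
    by_contra hne
    have hpos : 0 < g e := Nat.pos_of_ne_zero hne
    have : resRel E' κ g e.2 e.1 := Or.inr ⟨by simpa using heE, by simpa using hpos⟩
    exact h1 (Relation.ReflTransGen.tail h2 this)
  have hid := cut_identity hE g hg.2.2 hs ht
  have h1 : ∑ e ∈ E'.filter (fun e => e.1 ∈ S ∧ e.2 ∉ S), (g e : ℤ) =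
      ∑ e ∈ E'.filter (fun e => e.1 ∈ S ∧ e.2 ∉ S), (κ e : ℤ) := by
    refine Finset.sum_congr rfl fun e he => ?_
    exact_mod_cast hcross e he
  have h2 : ∑ e ∈ E'.filter (fun e => e.1 ∉ S ∧ e.2 ∈ S), (g e : ℤ) = 0 := by
    refine Finset.sum_eq_zero fun e he => ?_
    exact_mod_cast hrev e he
  rw [h1, h2, sub_zero] at hid
  refine ⟨S, hs, ht, ?_⟩
  have : (∑ e ∈ E'.filter (fun e => e.1 ∈ S ∧ e.2 ∉ S), (κ e : ℤ)) = (fval N E' g : ℤ) :=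
    hid.symm
  exact_mod_cast this.le

lemma exc_path {E' : Finset (V × V)} {p : List V} {s t : V} (hnd : p.Nodup)
    (hh : p.head? = some s) (hl : p.getLast? = some t) (hst : s ≠ t)
    (hpe : ∀ e, e ∈ zE p → e ∈ E') (x : V) :
    exc E' (fun e => if e ∈ zE p then 1 else 0) x =
      (if s = x then 1 else 0) - (if t = x then 1 else 0) := by
  classical
  have hsucc : ∑ e ∈ E', (if e.1 = x then (if e ∈ zE p then (1:ℤ) else 0) else 0) =
      if (∃ b, (x, b) ∈ zE p) then 1 else 0 := by
    have hstep : ∀ e ∈ E', (if e.1 = x then (if e ∈ zE p then (1:ℤ) else 0) else 0) =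
        if (e.1 = x ∧ e ∈ zE p) then 1 else 0 := by
      intro e _
      split_ifs <;> simp_all
    rw [Finset.sum_congr rfl hstep, ← Finset.sum_filter]
    by_cases h : ∃ b, (x, b) ∈ zE p
    · obtain ⟨b₀, hb₀⟩ := h
      have : E'.filter (fun e => e.1 = x ∧ e ∈ zE p) = {(x, b₀)} := by
        ext e
        simp only [Finset.mem_filter, Finset.mem_singleton]
        constructor
        · rintro ⟨heE, h1, h2⟩
          have : e = (x, e.2) := by rw [← h1]
          rw [this] at h2 ⊢
          rw [succ_unique hnd h2 hb₀]
        · rintro rfl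
          exact ⟨hpe _ hb₀, rfl, hb₀⟩
      rw [this, Finset.sum_singleton, if_pos (⟨b₀, hb₀⟩ : ∃ b, (x, b) ∈ zE p)]
    · have : E'.filter (fun e => e.1 = x ∧ e ∈ zE p) = ∅ := by
        ext e
        simp only [Finset.mem_filter, Finset.notMem_empty, iff_false]
        rintro ⟨heE, h1, h2⟩
        exact h ⟨e.2, by rwa [show (x, e.2) = e by rw [← h1]]⟩
      rw [this]
      simp [h]
  have hpred : ∑ e ∈ E', (if e.2 = x then (if e ∈ zE p then (1:ℤ) else 0) else 0) =
      if (∃ a, (a, x) ∈ zE p) then 1 else 0 := by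
    have hstep : ∀ e ∈ E', (if e.2 = x then (if e ∈ zE p then (1:ℤ) else 0) else 0) =
        if (e.2 = x ∧ e ∈ zE p) then 1 else 0 := by
      intro e _
      split_ifs <;> simp_all
    rw [Finset.sum_congr rfl hstep, ← Finset.sum_filter]
    by_cases h : ∃ a, (a, x) ∈ zE p
    · obtain ⟨a₀, ha₀⟩ := h
      have : E'.filter (fun e => e.2 = x ∧ e ∈ zE p) = {(a₀, x)} := by
        ext e
        simp only [Finset.mem_filter, Finset.mem_singleton]
        constructor
        · rintro ⟨heE, h1, h2⟩
          have : e = (e.1, x) := by rw [← h1]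
          rw [this] at h2 ⊢
          rw [pred_unique hnd h2 ha₀]
        · rintro rfl
          exact ⟨hpe _ ha₀, rfl, ha₀⟩
      rw [this, Finset.sum_singleton, if_pos (⟨a₀, ha₀⟩ : ∃ a, (a, x) ∈ zE p)]
    · have : E'.filter (fun e => e.2 = x ∧ e ∈ zE p) = ∅ := by
        ext e
        simp only [Finset.mem_filter, Finset.notMem_empty, iff_false]
        rintro ⟨heE, h1, h2⟩
        exact h ⟨e.1, by rwa [show (e.1, x) = e by rw [← h1]]⟩
      rw [this]
      simp [h]
  have hsmem : s ∈ p := List.mem_of_mem_head? (by rw [hh]; rfl)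
  have htmem : t ∈ p := by
    obtain ⟨hne, heq⟩ := List.mem_getLast?_eq_getLast (show t ∈ p.getLast? by rw [hl]; rfl)
    rw [heq]; exact List.getLast_mem hne
  unfold exc
  push_cast
  rw [Finset.sum_sub_distrib, hsucc, hpred]
  by_cases hxp : x ∈ p
  · by_cases hxs : x = s
    · subst hxs
      have h1 : ∃ b, (x, b) ∈ zE p := exists_succ hl hxp (fun h => hst h)
      have h2 : ¬ ∃ a, (a, x) ∈ zE p := fun h => no_pred_head hnd hh h.choose_spec
      rw [if_pos h1, if_neg h2, if_pos rfl, if_neg (fun h => hst h.symm)]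
    · by_cases hxt : x = t
      · subst hxt
        have h1 : ¬ ∃ b, (x, b) ∈ zE p := fun h => no_succ_last hnd hl h.choose_spec
        have h2 : ∃ a, (a, x) ∈ zE p := exists_pred hh hxp hxs
        rw [if_pos h2, if_neg h1, if_neg (fun h => hxs h.symm), if_pos rfl]
      · have h1 : ∃ b, (x, b) ∈ zE p := exists_succ hl hxp hxt
        have h2 : ∃ a, (a, x) ∈ zE p := exists_pred hh hxp hxs
        rw [if_pos h1, if_pos h2, if_neg (fun h => hxs h.symm), if_neg (fun h => hxt h.symm)]
        norm_num
  · have h1 : ¬ ∃ b, (x, b) ∈ zE p := fun h => hxp (mem_left_of_zE h.choose_spec)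
    have h2 : ¬ ∃ a, (a, x) ∈ zE p := fun h => hxp (mem_right_of_zE h.choose_spec)
    have h3 : ¬ (s = x) := fun h => hxp (h ▸ hsmem)
    have h4 : ¬ (t = x) := fun h => hxp (h ▸ htmem)
    rw [if_neg h1, if_neg h2, if_neg h3, if_neg h4]

lemma dec {N : Network V} {E' : Finset (V × V)} {κ : V × V → ℕ} (hE : ↑E' ⊆ N.E) :
    ∀ (fuel : ℕ) (g : V × V → ℕ), IsFF N E' κ g → ∑ e ∈ E', g e ≤ fuel →
    ∃ L : List (List V), (∀ p ∈ L, IsSTPath N p) ∧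
      (∀ e, (L.filter (fun p => e ∈ zE p)).length ≤ g e) ∧ L.length = fval N E' g := by
  intro fuel
  induction fuel with
  | zero =>
    intro g hg hsum
    have hzero : ∀ e ∈ E', g e = 0 := by
      intro e he
      have := Finset.sum_eq_zero_iff.1 (Nat.le_zero.1 hsum)
      exact this e he
    refine ⟨[], by simp, fun e => by simp, ?_⟩
    simp only [List.length_nil, fval]
    rw [Finset.sum_eq_zero]
    intro e he
    simp [hzero e he]
  | succ n ih =>
    intro g hg hsum
    by_cases h0 : fval N E' g = 0
    · exact ⟨[], by simp, fun e => by simp, by simp [h0]⟩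
    · have hpos : 0 < fval N E' g := Nat.pos_of_ne_zero h0
      set R₀ : V → V → Prop := fun a b => (a, b) ∈ E' ∧ 0 < g (a, b) with hR₀
      have hreach : Relation.ReflTransGen R₀ N.s N.t := by
        by_contra hnr
        set S : Set V := {x | Relation.ReflTransGen R₀ N.s x} with hSdef
        have hs : N.s ∈ S := Relation.ReflTransGen.refl
        have ht : N.t ∉ S := hnr
        have hid := cut_identity hE g hg.2.2 hs ht
        have hcr : ∑ e ∈ E'.filter (fun e => e.1 ∈ S ∧ e.2 ∉ S), (g e : ℤ) = 0 := by
          refine Finset.sum_eq_zero fun e he => ?_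
          have heE := (Finset.mem_filter.1 he).1
          have h1 := (Finset.mem_filter.1 he).2.1
          have h2 := (Finset.mem_filter.1 he).2.2
          by_contra hne
          have hgt : 0 < g e := Nat.pos_of_ne_zero (by exact_mod_cast hne)
          have : R₀ e.1 e.2 := ⟨by simpa using heE, by simpa using hgt⟩
          exact h2 (Relation.ReflTransGen.tail h1 this)
        rw [hcr] at hid
        have hnn : 0 ≤ ∑ e ∈ E'.filter (fun e => e.1 ∉ S ∧ e.2 ∈ S), (g e : ℤ) :=
          Finset.sum_nonneg fun e _ => by positivity
        omega
      obtain ⟨p, hp1, hp2, hp3, hp4⟩ := exists_nodup_path hreach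
      have hpe : ∀ e, e ∈ zE p → e ∈ E' ∧ 0 < g e := by
        intro e he
        have := rel_of_mem_zE hp1 (show (e.1, e.2) ∈ zE p by simpa using he)
        simpa using this
      set ψ : V × V → ℕ := fun e => if e ∈ zE p then 1 else 0 with hψ
      set g' : V × V → ℕ := fun e => g e - ψ e with hg'
      have hcast : ∀ e, (g' e : ℤ) = (g e : ℤ) - (ψ e : ℤ) := by
        intro e
        by_cases h : e ∈ zE p
        · have : 1 ≤ g e := (hpe e h).2
          simp only [hg', hψ, if_pos h]
          push_cast [Nat.cast_sub this]
          simp [this]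
        · simp [hg', hψ, h]
      have hexc : ∀ x, exc E' g' x = exc E' g x - exc E' ψ x := by
        intro x
        unfold exc
        rw [← Finset.sum_sub_distrib]
        refine Finset.sum_congr rfl fun e _ => ?_
        rw [hcast e]
        split_ifs <;> ring
      have hexcψ : ∀ x, exc E' ψ x = (if N.s = x then 1 else 0) - (if N.t = x then 1 else 0) :=
        exc_path hp2 hp3 hp4 N.ne (fun e he => (hpe e he).1)
      have hff' : IsFF N E' κ g' := by
        refine ⟨fun e he => ?_, fun e => le_trans (Nat.sub_le _ _) (hg.2.1 e), fun x hxs hxt => ?_⟩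
        · simp [hg', hg.1 e he]
        · rw [hexc x, hexcψ x, hg.2.2 x hxs hxt, if_neg (fun h => hxs h.symm),
            if_neg (fun h => hxt h.symm)]
          ring
      have hfv : fval N E' g' = fval N E' g - 1 ∧ 1 ≤ fval N E' g := by
        have h1 : exc E' g' N.s = exc E' g N.s - 1 := by
          rw [hexc N.s, hexcψ N.s, if_pos rfl, if_neg (fun h => N.ne h.symm)]
          ring
        rw [exc_s hE, exc_s hE] at h1
        omega
      -- the path has at least one edge, and its first edge has positive g
      obtain ⟨b, rest, hform⟩ : ∃ b rest, p = N.s :: b :: rest := by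
        rcases p with _ | ⟨x, q⟩
        · simp at hp3
        · have hx : x = N.s := by simpa using hp3
          subst hx
          rcases q with _ | ⟨b, r⟩
          · exfalso
            exact N.ne (by simpa using hp4)
          · exact ⟨b, r, rfl⟩
      have hfirst : (N.s, b) ∈ zE p := by rw [hform]; simp [zE]
      have hdec : ∑ e ∈ E', g' e < ∑ e ∈ E', g e := by
        refine Finset.sum_lt_sum (fun e _ => Nat.sub_le _ _) ⟨(N.s, b), (hpe _ hfirst).1, ?_⟩
        have h1 : ψ (N.s, b) = 1 := by simp [hψ, hfirst]
        have h2 : 0 < g (N.s, b) := (hpe _ hfirst).2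
        simp only [hg', h1]
        omega
      obtain ⟨L', hL1, hL2, hL3⟩ := ih g' hff' (by omega)
      refine ⟨p :: L', ?_, ?_, ?_⟩
      · intro q hq
        rcases List.mem_cons.1 hq with rfl | hq'
        · refine ⟨?_, hp3, hp4, hp2⟩
          exact List.IsChain.imp (fun a b h => hE h.1) hp1
        · exact hL1 q hq'
      · intro e
        rw [List.filter_cons]
        by_cases hep : e ∈ zE p
        · rw [if_pos (by simpa using hep)]
          have := hL2 e
          have hψe : ψ e = 1 := by simp [hψ, hep]
          have hge : 1 ≤ g e := (hpe e hep).2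
          simp only [List.length_cons]
          have hg'e : g' e = g e - 1 := by simp [hg', hψe]
          omega
        · rw [if_neg (by simpa using hep)]
          exact le_trans (hL2 e) (Nat.sub_le _ _)
      · simp only [List.length_cons, hL3]
        omega

theorem finThm (N : Network V) (E' : Finset (V × V)) (κ : V × V → ℕ) (hE : ↑E' ⊆ N.E) :
    ∃ (L : List (List V)) (S : Set V), N.s ∈ S ∧ N.t ∉ S ∧
      (∀ p ∈ L, IsSTPath N p) ∧ (∀ e, (L.filter (fun p => e ∈ zE p)).length ≤ κ e) ∧
      ∑ e ∈ E'.filter (fun e => e.1 ∈ S ∧ e.2 ∉ S), κ e ≤ L.length := by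
  obtain ⟨g, hg, hnr⟩ := exists_maxflow N E' κ hE
  obtain ⟨S, hs, ht, hcut⟩ := maxflow_cut hE hg hnr
  obtain ⟨L, hL1, hL2, hL3⟩ := dec hE (∑ e ∈ E', g e) g hg le_rfl
  exact ⟨L, S, hs, ht, hL1, fun e => le_trans (hL2 e) (hg.2.1 e), by omega⟩

end Finite

section Infinite
open List

variable {V : Type}

lemma tsum_ite_succ {p : List V} (hnd : p.Nodup) (x : V) (θ : ℝ≥0∞) :
    (∑' v, if (x, v) ∈ zE p then θ else 0) = if ∃ b, (x, b) ∈ zE p then θ else 0 := by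
  by_cases h : ∃ b, (x, b) ∈ zE p
  · obtain ⟨b₀, hb₀⟩ := h
    rw [if_pos (⟨b₀, hb₀⟩ : ∃ b, (x, b) ∈ zE p)]
    have hfun : (fun v => if (x, v) ∈ zE p then θ else 0) =
        fun v => if v = b₀ then θ else 0 := by
      funext v
      by_cases hv : (x, v) ∈ zE p
      · rw [if_pos hv, if_pos (succ_unique hnd hv hb₀)]
      · rw [if_neg hv, if_neg (fun h => hv (by rw [h]; exact hb₀))]
    rw [hfun]
    exact tsum_ite_eq b₀ (fun _ => θ)
  · rw [if_neg h]
    convert tsum_zero with v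
    rw [if_neg (fun hv => h ⟨v, hv⟩)]

lemma tsum_ite_pred {p : List V} (hnd : p.Nodup) (x : V) (θ : ℝ≥0∞) :
    (∑' v, if (v, x) ∈ zE p then θ else 0) = if ∃ a, (a, x) ∈ zE p then θ else 0 := by
  by_cases h : ∃ a, (a, x) ∈ zE p
  · obtain ⟨a₀, ha₀⟩ := h
    rw [if_pos (⟨a₀, ha₀⟩ : ∃ a, (a, x) ∈ zE p)]
    have hfun : (fun v => if (v, x) ∈ zE p then θ else 0) =
        fun v => if v = a₀ then θ else 0 := by
      funext v
      by_cases hv : (v, x) ∈ zE p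
      · rw [if_pos hv, if_pos (pred_unique hnd hv ha₀)]
      · rw [if_neg hv, if_neg (fun h => hv (by rw [h]; exact ha₀))]
    rw [hfun]
    exact tsum_ite_eq a₀ (fun _ => θ)
  · rw [if_neg h]
    convert tsum_zero with v
    rw [if_neg (fun hv => h ⟨v, hv⟩)]

lemma mundane_le_cutCap {N : Network V} {f : V × V → ℝ≥0} (hf : IsFlow N f)
    (hm : IsMundane N f) {S : Set V} (hS : IsCut N S) : flowValue N f ≤ cutCap N S := by
  obtain ⟨ι, θ, P, hθ, hP, heq⟩ := hm
  have h1 : flowValue N f ≤ ∑' i, (θ i : ℝ≥0∞) := by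
    rw [flowValue, dplus]
    calc ∑' v, (f (N.s, v) : ℝ≥0∞)
        = ∑' v, ∑' i, (if (N.s, v) ∈ (P i).zip (P i).tail then (θ i : ℝ≥0∞) else 0) :=
          tsum_congr fun v => heq (N.s, v)
      _ = ∑' i, ∑' v, (if (N.s, v) ∈ (P i).zip (P i).tail then (θ i : ℝ≥0∞) else 0) :=
          ENNReal.tsum_comm
      _ ≤ ∑' i, (θ i : ℝ≥0∞) := by
          refine ENNReal.tsum_le_tsum fun i => ?_
          rw [show (fun v => if (N.s, v) ∈ (P i).zip (P i).tail then (θ i : ℝ≥0∞) else 0) =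
            fun v => if (N.s, v) ∈ zE (P i) then (θ i : ℝ≥0∞) else 0 from rfl,
            tsum_ite_succ (hP i).2.2.2 N.s _]
          split_ifs
          · exact le_rfl
          · exact zero_le
  have h2 : (∑' i, (θ i : ℝ≥0∞)) ≤ ∑' e : cutEdges N S, (f (e : V × V) : ℝ≥0∞) := by
    calc ∑' i, (θ i : ℝ≥0∞)
        ≤ ∑' i, ∑' e : cutEdges N S,
            (if (e : V × V) ∈ (P i).zip (P i).tail then (θ i : ℝ≥0∞) else 0) := by
          refine ENNReal.tsum_le_tsum fun i => ?_
          obtain ⟨e₀, he₀, hc1, hc2⟩ :=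
            exists_crossing (p := P i) (hP i).2.1 (hP i).2.2.1 hS.1 hS.2
          have heE : e₀ ∈ N.E := by
            have := rel_of_mem_zE (hP i).1
              (show (e₀.1, e₀.2) ∈ zE (P i) by simpa using he₀)
            simpa using this
          have hecut : e₀ ∈ cutEdges N S := ⟨heE, hc1, hc2⟩
          have hle := ENNReal.le_tsum (f := fun e : cutEdges N S =>
            if (e : V × V) ∈ (P i).zip (P i).tail then (θ i : ℝ≥0∞) else 0) ⟨e₀, hecut⟩
          rwa [if_pos he₀] at hle
      _ = ∑' e : cutEdges N S, ∑' i,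
            (if (e : V × V) ∈ (P i).zip (P i).tail then (θ i : ℝ≥0∞) else 0) :=
          ENNReal.tsum_comm
      _ = ∑' e : cutEdges N S, (f (e : V × V) : ℝ≥0∞) :=
          tsum_congr fun e => (heq (e : V × V)).symm
  have h3 : (∑' e : cutEdges N S, (f (e : V × V) : ℝ≥0∞)) ≤ cutCap N S := by
    refine ENNReal.tsum_le_tsum fun e => ?_
    exact_mod_cast hf.cap (e : V × V)
  exact le_trans h1 (le_trans h2 h3)

lemma sum_fin_ite (L : List (List V)) (e : V × V) (θ : ℝ≥0) :
    ∑ i : Fin L.length, (if e ∈ zE (L.get i) then θ else 0) =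
      θ * ((L.filter (fun p => e ∈ zE p)).length : ℝ≥0) := by
  induction L with
  | nil => simp
  | cons p L' ih =>
    show (∑ i : Fin (L'.length + 1), if e ∈ zE ((p :: L').get i) then θ else 0) =
      θ * (((p :: L').filter (fun p => e ∈ zE p)).length : ℝ≥0)
    rw [Fin.sum_univ_succ]
    rw [show (∑ i : Fin L'.length, if e ∈ zE ((p :: L').get i.succ) then θ else 0) =
      ∑ i : Fin L'.length, if e ∈ zE (L'.get i) then θ else 0 from rfl]
    rw [show ((p :: L').get (0 : Fin (L'.length + 1))) = p from rfl]
    rw [ih, List.filter_cons]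
    by_cases hq : e ∈ zE p
    · rw [if_pos hq, if_pos (by simpa using hq)]
      simp only [List.length_cons]
      push_cast
      ring
    · rw [if_neg hq, if_neg (by simpa using hq)]
      ring

lemma mundane_of_list {N : Network V} (L : List (List V)) (hL : ∀ p ∈ L, IsSTPath N p)
    (θ : ℝ≥0) (hθ : 0 < θ)
    (hcap : ∀ e, θ * ((L.filter (fun p => e ∈ zE p)).length : ℝ≥0) ≤ N.c e) :
    ∃ f, (IsFlow N f ∧ IsMundane N f) ∧ flowValue N f = (L.length : ℝ≥0∞) * (θ : ℝ≥0∞) := by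
  classical
  set f : V × V → ℝ≥0 := fun e => ∑ i : Fin L.length, if e ∈ zE (L.get i) then θ else 0
    with hfdef
  have hfe : ∀ e, f e = θ * ((L.filter (fun p => e ∈ zE p)).length : ℝ≥0) := by
    intro e
    rw [hfdef]
    exact sum_fin_ite L e θ
  have hcoe : ∀ e, (f e : ℝ≥0∞) =
      ∑ i : Fin L.length, (if e ∈ zE (L.get i) then (θ : ℝ≥0∞) else 0) := by
    intro e
    have : (f e : ℝ≥0∞) =
        ((∑ i : Fin L.length, if e ∈ zE (L.get i) then θ else 0 : ℝ≥0) : ℝ≥0∞) := rfl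
    rw [this, ENNReal.coe_finset_sum]
    refine Finset.sum_congr rfl fun i _ => ?_
    split_ifs <;> simp
  have hdplus : ∀ x, dplus f x =
      ∑ i : Fin L.length, (if ∃ b, (x, b) ∈ zE (L.get i) then (θ : ℝ≥0∞) else 0) := by
    intro x
    rw [dplus]
    calc ∑' v, (f (x, v) : ℝ≥0∞)
        = ∑' v, ∑ i : Fin L.length, (if (x, v) ∈ zE (L.get i) then (θ : ℝ≥0∞) else 0) :=
          tsum_congr fun v => hcoe (x, v)
      _ = ∑ i : Fin L.length, ∑' v, (if (x, v) ∈ zE (L.get i) then (θ : ℝ≥0∞) else 0) :=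
          Summable.tsum_finsetSum fun i _ => ENNReal.summable
      _ = ∑ i : Fin L.length, (if ∃ b, (x, b) ∈ zE (L.get i) then (θ : ℝ≥0∞) else 0) :=
          Finset.sum_congr rfl fun i _ =>
            tsum_ite_succ (hL _ (L.get_mem i)).2.2.2 x _
  have hdminus : ∀ x, dminus f x =
      ∑ i : Fin L.length, (if ∃ a, (a, x) ∈ zE (L.get i) then (θ : ℝ≥0∞) else 0) := by
    intro x
    rw [dminus]
    calc ∑' v, (f (v, x) : ℝ≥0∞)
        = ∑' v, ∑ i : Fin L.length, (if (v, x) ∈ zE (L.get i) then (θ : ℝ≥0∞) else 0) :=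
          tsum_congr fun v => hcoe (v, x)
      _ = ∑ i : Fin L.length, ∑' v, (if (v, x) ∈ zE (L.get i) then (θ : ℝ≥0∞) else 0) :=
          Summable.tsum_finsetSum fun i _ => ENNReal.summable
      _ = ∑ i : Fin L.length, (if ∃ a, (a, x) ∈ zE (L.get i) then (θ : ℝ≥0∞) else 0) :=
          Finset.sum_congr rfl fun i _ =>
            tsum_ite_pred (hL _ (L.get_mem i)).2.2.2 x _
  have hflow : IsFlow N f := by
    refine ⟨?_, ?_, ?_⟩
    · intro e he
      rw [hfe e]
      have : L.filter (fun p => e ∈ zE p) = [] := by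
        rw [List.filter_eq_nil_iff]
        intro p hp hmem
        have hw := (hL p hp).1
        have := rel_of_mem_zE hw (show (e.1, e.2) ∈ zE p by simpa using of_decide_eq_true hmem)
        exact he (by simpa using this)
      rw [this]
      simp
    · intro e
      rw [hfe e]
      exact hcap e
    · intro x hxs hxt
      rw [hdplus x, hdminus x]
      refine Finset.sum_congr rfl fun i _ => ?_
      have hPi := hL _ (L.get_mem i)
      have hiff : (∃ b, (x, b) ∈ zE (L.get i)) ↔ (∃ a, (a, x) ∈ zE (L.get i)) := by
        constructor
        · rintro ⟨b, hb⟩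
          exact exists_pred hPi.2.1 (mem_left_of_zE hb) hxs
        · rintro ⟨a, ha⟩
          exact exists_succ hPi.2.2.1 (mem_right_of_zE ha) hxt
      rw [if_congr hiff rfl rfl]
  have hmund : IsMundane N f := by
    refine ⟨Fin L.length, fun _ => θ, fun i => L.get i, fun _ => hθ,
      fun i => hL _ (L.get_mem i), fun e => ?_⟩
    rw [tsum_fintype, hcoe e]
  have hval : flowValue N f = (L.length : ℝ≥0∞) * (θ : ℝ≥0∞) := by
    rw [flowValue, hdplus N.s]
    have hall : ∀ i : Fin L.length, (∃ b, (N.s, b) ∈ zE (L.get i)) := by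
      intro i
      have hPi := hL _ (L.get_mem i)
      refine exists_succ hPi.2.2.1 ?_ (fun h => N.ne h)
      exact List.mem_of_mem_head? (by rw [hPi.2.1]; rfl)
    rw [Finset.sum_congr rfl fun i _ => if_pos (hall i)]
    rw [Finset.sum_const, Finset.card_univ, Fintype.card_fin, nsmul_eq_mul]
  exact ⟨f, ⟨hflow, hmund⟩, hval⟩

lemma compactness {N : Network V} {ρ : ℝ≥0}
    (h : ∀ E' : Finset (V × V), ↑E' ⊆ N.E → ∃ S : Set V, IsCut N S ∧
      ∑ e ∈ E'.filter (fun e => e.1 ∈ S ∧ e.2 ∉ S), (N.c e : ℝ≥0∞) ≤ ρ) :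
    ∃ S : Set V, IsCut N S ∧ cutCap N S ≤ (ρ : ℝ≥0∞) := by
  classical
  set C : {E' : Finset (V × V) // ↑E' ⊆ N.E} → Set (V → Bool) := fun E' =>
    {χ | χ N.s = true ∧ χ N.t = false ∧
      ∑ e ∈ E'.1.filter (fun e => χ e.1 = true ∧ χ e.2 = false), (N.c e : ℝ≥0∞) ≤ ρ}
    with hC
  have hclosed : ∀ E', IsClosed (C E') := by
    intro E'
    set K : Finset V := (E'.1.image Prod.fst ∪ E'.1.image Prod.snd) ∪ {N.s, N.t} with hK
    have hsK : N.s ∈ K := by simp [hK]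
    have htK : N.t ∈ K := by simp [hK]
    have h1K : ∀ e : {x // x ∈ E'.1}, e.1.1 ∈ K := by
      intro e
      simp only [hK, Finset.mem_union]
      exact Or.inl (Or.inl (Finset.mem_image.2 ⟨e.1, e.2, rfl⟩))
    have h2K : ∀ e : {x // x ∈ E'.1}, e.1.2 ∈ K := by
      intro e
      simp only [hK, Finset.mem_union]
      exact Or.inl (Or.inr (Finset.mem_image.2 ⟨e.1, e.2, rfl⟩))
    set Φ : (V → Bool) → ({v // v ∈ K} → Bool) := fun χ k => χ k with hΦ
    have hcont : Continuous Φ := continuous_pi fun k => continuous_apply (k : V)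
    set D : Set ({v // v ∈ K} → Bool) := {η | η ⟨N.s, hsK⟩ = true ∧ η ⟨N.t, htK⟩ = false ∧
      ∑ e ∈ E'.1.attach.filter
        (fun e => η ⟨e.1.1, h1K e⟩ = true ∧ η ⟨e.1.2, h2K e⟩ = false),
        (N.c e.1 : ℝ≥0∞) ≤ ρ} with hD
    have hCeq : C E' = Φ ⁻¹' D := by
      ext χ
      simp only [hC, hD, Set.mem_setOf_eq, Set.mem_preimage, hΦ]
      refine and_congr_right fun _ => and_congr_right fun _ => ?_
      have : ∑ e ∈ E'.1.attach.filter
          (fun e => χ e.1.1 = true ∧ χ e.1.2 = false),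
          (N.c e.1 : ℝ≥0∞) =
          ∑ e ∈ E'.1.filter (fun e => χ e.1 = true ∧ χ e.2 = false), (N.c e : ℝ≥0∞) := by
        rw [Finset.sum_filter, Finset.sum_filter]
        exact Finset.sum_attach E'.1 fun e =>
          if χ e.1 = true ∧ χ e.2 = false then (N.c e : ℝ≥0∞) else 0
      rw [← this]
    rw [hCeq]
    have : DiscreteTopology ({v // v ∈ K} → Bool) := Pi.discreteTopology
    exact (isClosed_discrete D).preimage hcont
  have hnonempty : ∀ E', (C E').Nonempty := by
    intro E'
    obtain ⟨S, hS, hle⟩ := h E'.1 E'.2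
    refine ⟨fun v => decide (v ∈ S), by simpa using hS.1, by simpa using hS.2, ?_⟩
    have : (E'.1.filter (fun e => decide (e.1 ∈ S) = true ∧ decide (e.2 ∈ S) = false)) =
        E'.1.filter (fun e => e.1 ∈ S ∧ e.2 ∉ S) := by
      refine Finset.filter_congr fun e _ => ?_
      simp
    rw [this]
    exact hle
  have hdir : Directed (· ⊇ ·) C := by
    intro E1 E2
    refine ⟨⟨E1.1 ∪ E2.1, by
      rw [Finset.coe_union]
      exact Set.union_subset E1.2 E2.2⟩, ?_, ?_⟩
    · intro χ hχ
      refine ⟨hχ.1, hχ.2.1, le_trans ?_ hχ.2.2⟩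
      exact Finset.sum_le_sum_of_subset
        (Finset.filter_subset_filter _ Finset.subset_union_left)
    · intro χ hχ
      refine ⟨hχ.1, hχ.2.1, le_trans ?_ hχ.2.2⟩
      exact Finset.sum_le_sum_of_subset
        (Finset.filter_subset_filter _ Finset.subset_union_right)
  have hcompact : ∀ E', IsCompact (C E') := fun E' => (hclosed E').isCompact
  haveI : Nonempty {E' : Finset (V × V) // ↑E' ⊆ N.E} := ⟨⟨∅, by simp⟩⟩
  obtain ⟨χ, hχ⟩ := IsCompact.nonempty_iInter_of_directed_nonempty_isCompact_isClosed
    C hdir hnonempty hcompact hclosed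
  simp only [Set.mem_iInter] at hχ
  set S : Set V := {v | χ v = true} with hSdef
  have hs : N.s ∈ S := (hχ ⟨∅, by simp⟩).1
  have ht : N.t ∉ S := by
    have := (hχ ⟨∅, by simp⟩).2.1
    simp [hSdef, this]
  refine ⟨S, ⟨hs, ht⟩, ?_⟩
  rw [cutCap, ENNReal.tsum_eq_iSup_sum]
  refine iSup_le fun F => ?_
  set E' : Finset (V × V) := F.image Subtype.val with hE'
  have hsub : ↑E' ⊆ N.E := by
    intro e he
    simp only [hE', Finset.coe_image, Set.mem_image] at he
    obtain ⟨e', _, rfl⟩ := he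
    exact e'.2.1
  have hmem := hχ ⟨E', hsub⟩
  have hfilter : E'.filter (fun e => χ e.1 = true ∧ χ e.2 = false) = E' := by
    refine Finset.filter_true_of_mem fun e he => ?_
    simp only [hE', Finset.mem_image] at he
    obtain ⟨e', _, rfl⟩ := he
    have hcut := e'.2
    refine ⟨hcut.2.1, ?_⟩
    have h2 : (e' : V × V).2 ∉ S := hcut.2.2
    simpa [hSdef] using h2
  have hbound : ∑ e ∈ E', (N.c e : ℝ≥0∞) ≤ ρ := by
    have h3 := hmem.2.2
    rwa [hfilter] at h3
  have himg : ∑ e ∈ E', (N.c e : ℝ≥0∞) = ∑ e ∈ F, (N.c (e : V × V) : ℝ≥0∞) := by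
    rw [hE']
    exact Finset.sum_image (fun a _ b _ h => Subtype.ext h)
  rw [← himg]
  exact hbound

end Infinite

end MFMC

theorem stmt15 [Countable V] (N : Network V) :
    (⨆ (f : V × V → ℝ≥0) (_ : IsFlow N f ∧ IsMundane N f), flowValue N f) =
      ⨅ (S : Set V) (_ : IsCut N S), cutCap N S := by
  refine le_antisymm ?_ ?_
  · exact iSup₂_le fun f hf => le_iInf₂ fun S hS => MFMC.mundane_le_cutCap hf.1 hf.2 hS
  · refine le_of_forall_lt fun r hr => ?_
    obtain ⟨r'', hr1, hr2⟩ := exists_between hr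
    have hfin : r'' < ⊤ := lt_of_lt_of_le hr2 le_top
    set ρ : ℝ≥0 := r''.toNNReal with hρ
    have hρcoe : (ρ : ℝ≥0∞) = r'' := ENNReal.coe_toNNReal hfin.ne
    have hmain : (ρ : ℝ≥0∞) ≤
        ⨆ (f : V × V → ℝ≥0) (_ : IsFlow N f ∧ IsMundane N f), flowValue N f := by
      have hcuts : ∀ S : Set V, IsCut N S → (ρ : ℝ≥0∞) < cutCap N S := by
        intro S hS
        calc (ρ : ℝ≥0∞) = r'' := hρcoe
          _ < ⨅ (S : Set V) (_ : IsCut N S), cutCap N S := hr2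
          _ ≤ cutCap N S := iInf₂_le S hS
      have hEx : ∃ E' : Finset (V × V), ↑E' ⊆ N.E ∧ ∀ S : Set V, IsCut N S →
          (ρ : ℝ≥0∞) < ∑ e ∈ E'.filter (fun e => e.1 ∈ S ∧ e.2 ∉ S), (N.c e : ℝ≥0∞) := by
        by_contra hcon
        push_neg at hcon
        obtain ⟨S, hS, hle⟩ := MFMC.compactness (N := N) (ρ := ρ) (fun E' hE' => by
          obtain ⟨S, hS, hle⟩ := hcon E' hE'
          exact ⟨S, hS, hle⟩)
        exact absurd (hcuts S hS) (not_lt.2 hle)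
      obtain ⟨E', hEsub, hEcut⟩ := hEx
      refine ENNReal.le_of_forall_pos_le_add fun ε hε _ => ?_
      obtain ⟨n₀, hn₀⟩ := exists_nat_ge ((E'.card : ℝ≥0) / ε)
      set n : ℕ := n₀ + 1 with hn
      have hnpos : 0 < (n : ℝ≥0) := by
        have : 0 < n := Nat.succ_pos n₀
        exact_mod_cast this
      have hcard : (E'.card : ℝ≥0) ≤ (n : ℝ≥0) * ε := by
        have h1 : (E'.card : ℝ≥0) ≤ (n₀ : ℝ≥0) * ε := (div_le_iff₀ hε).1 hn₀
        refine le_trans h1 (mul_le_mul_left ?_ ε)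
        exact_mod_cast Nat.le_succ n₀
      set κ : V × V → ℕ := fun e => ⌊(n : ℝ≥0) * N.c e⌋₊ with hκ
      obtain ⟨L, S₀, hs₀, ht₀, hLpaths, hLcount, hcut⟩ := MFMC.finThm N E' κ hEsub
      set θ : ℝ≥0 := (n : ℝ≥0)⁻¹ with hθdef
      have hθpos : 0 < θ := by rw [hθdef]; positivity
      have hcap : ∀ e, θ * ((L.filter (fun p => e ∈ MFMC.zE p)).length : ℝ≥0) ≤ N.c e := by
        intro e
        have h1 : ((L.filter (fun p => e ∈ MFMC.zE p)).length : ℝ≥0) ≤ (κ e : ℝ≥0) := by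
          exact_mod_cast hLcount e
        have h2 : (κ e : ℝ≥0) ≤ (n : ℝ≥0) * N.c e := Nat.floor_le zero_le
        calc θ * ((L.filter (fun p => e ∈ MFMC.zE p)).length : ℝ≥0)
            ≤ θ * ((n : ℝ≥0) * N.c e) := mul_le_mul_right (h1.trans h2) θ
          _ = N.c e := by rw [hθdef, inv_mul_cancel_left₀ hnpos.ne']
      obtain ⟨f, hf, hval⟩ := MFMC.mundane_of_list L hLpaths θ hθpos hcap
      set F := E'.filter (fun e => e.1 ∈ S₀ ∧ e.2 ∉ S₀) with hF
      have hρA : ρ < ∑ e ∈ F, N.c e := by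
        have h3 := hEcut S₀ ⟨hs₀, ht₀⟩
        rw [← ENNReal.coe_finset_sum] at h3
        exact_mod_cast h3
      have hterm : ∀ e ∈ F, (n : ℝ≥0) * N.c e ≤ (κ e : ℝ≥0) + 1 := fun e _ =>
        (Nat.lt_floor_add_one _).le
      have hchain : (n : ℝ≥0) * ∑ e ∈ F, N.c e ≤ (L.length : ℝ≥0) + (n : ℝ≥0) * ε := by
        rw [Finset.mul_sum]
        calc ∑ e ∈ F, (n : ℝ≥0) * N.c e ≤ ∑ e ∈ F, ((κ e : ℝ≥0) + 1) :=
              Finset.sum_le_sum hterm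
          _ = (∑ e ∈ F, (κ e : ℝ≥0)) + F.card := by
              rw [Finset.sum_add_distrib, Finset.sum_const, nsmul_eq_mul, mul_one]
          _ ≤ (L.length : ℝ≥0) + (E'.card : ℝ≥0) := by
              refine add_le_add ?_ ?_
              · exact_mod_cast hcut
              · exact_mod_cast Finset.card_le_card (Finset.filter_subset _ _)
          _ ≤ (L.length : ℝ≥0) + (n : ℝ≥0) * ε := add_le_add_right hcard _
      have hfinal : ρ ≤ (L.length : ℝ≥0) * θ + ε := by
        have heq : (n : ℝ≥0) * ((L.length : ℝ≥0) * θ + ε) =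
            (L.length : ℝ≥0) + (n : ℝ≥0) * ε := by
          rw [hθdef, mul_add, ← mul_assoc, mul_comm (n : ℝ≥0) ((L.length : ℝ≥0)),
            mul_assoc, mul_inv_cancel₀ hnpos.ne', mul_one]
        have hmul : (n : ℝ≥0) * ρ ≤ (n : ℝ≥0) * ((L.length : ℝ≥0) * θ + ε) := by
          rw [heq]
          exact le_trans (mul_le_mul_right hρA.le _) hchain
        exact le_of_mul_le_mul_left hmul hnpos
      have hsup : flowValue N f ≤
          ⨆ (f : V × V → ℝ≥0) (_ : IsFlow N f ∧ IsMundane N f), flowValue N f :=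
        le_iSup₂_of_le f hf le_rfl
      calc (ρ : ℝ≥0∞) ≤ (((L.length : ℝ≥0) * θ + ε : ℝ≥0) : ℝ≥0∞) := by
            exact_mod_cast hfinal
        _ = flowValue N f + (ε : ℝ≥0∞) := by
            rw [hval]
            push_cast
            ring
        _ ≤ (⨆ (f : V × V → ℝ≥0) (_ : IsFlow N f ∧ IsMundane N f), flowValue N f) +
            (ε : ℝ≥0∞) := add_le_add_left hsup _
    exact lt_of_lt_of_le (by rw [hρcoe]; exact hr1) hmain
end
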